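/- arXiv:1801.02530 — 5 statements merged into one kernel-verified Lean document; each statement's English description precedes it below -/
import Mathlib

section
/- Let (Ω, μ) be a probability space, let d ≥ 1, and let X₁, …, X_d be nonempty finite sets. Let G : Ω × X₁ × ⋯ × X_d → ℂ be measurable with |G| ≤ 1 everywhere. Then |E_{ω∼μ} E_{x₁∈X₁, …, x_d∈X_d}[G(ω, x₁, …, x_d)]|^{2^d} ≤ E_{ω∼μ} E[ ∏_{s∈{0,1}^d} 𝒞^{s₁+⋯+s_d} G(ω, x₁^{s₁}, …, x_d^{s_d}) ], where for each 1 ≤ j ≤ d the elements x_j^0, x_j^1 are drawn independently and uniformly from X_j, where 𝒞^k denotes complex conjugation applied when k is odd and the identity when k is even; in particular the right-hand side is a nonnegative real number. -/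
open MeasureTheory Finset Function
set_option maxHeartbeats 1000000

/-- `conjIter k z` applies complex conjugation to `z` when `k` is odd and is the
identity when `k` is even (the operator `𝒞^k`). -/
noncomputable def conjIter (k : ℕ) (z : ℂ) : ℂ :=
  if Even k then z else (starRingEnd ℂ) z

lemma abs_conjIter (k : ℕ) (z : ℂ) : ‖conjIter k z‖ = ‖z‖ := by
  unfold conjIter; split_ifs <;> simp

lemma conjIter_succ (k : ℕ) (z : ℂ) :
    conjIter (k + 1) z = (starRingEnd ℂ) (conjIter k z) := by
  simp only [conjIter, Nat.even_add_one]
  by_cases h : Even k <;> simp [h]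

lemma measurable_conjIter (k : ℕ) : Measurable (conjIter k) := by
  unfold conjIter; split_ifs
  · exact measurable_id
  · exact Complex.continuous_conj.measurable

section Finite
set_option linter.unusedSectionVars false
variable {d : ℕ} {X : Fin d → Type*} [∀ i, Fintype (X i)] [∀ i, Nonempty (X i)]

def FF (d k : ℕ) : Finset (Fin d → Bool) :=
  univ.filter fun s => ∀ i : Fin d, k ≤ i.1 → s i = false

noncomputable def PP (g : (∀ i, X i) → ℂ) (k : ℕ) (x₀ x₁ : ∀ i, X i) : ℂ :=
  ∏ s ∈ FF d k, conjIter (∑ i, if s i then 1 else 0) (g fun i => if s i then x₁ i else x₀ i)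

lemma mem_FF {k : ℕ} {s : Fin d → Bool} :
    s ∈ FF d k ↔ ∀ i : Fin d, k ≤ i.1 → s i = false := by
  simp [FF]

lemma FF_succ_filter_false (κ : Fin d) :
    (FF d (κ.1 + 1)).filter (fun s => s κ = false) = FF d κ.1 := by
  ext s
  simp only [mem_filter, mem_FF]
  constructor
  · rintro ⟨h1, h2⟩ i hi
    rcases eq_or_lt_of_le hi with h | h
    · have : i = κ := Fin.ext h.symm
      rw [this]; exact h2
    · exact h1 i h
  · intro h
    exact ⟨fun i hi => h i (by omega), h κ le_rfl⟩

lemma wgt_update_true {s : Fin d → Bool} (κ : Fin d) (hκ : s κ = false) :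
    (∑ i, if Function.update s κ true i then (1:ℕ) else 0)
      = (∑ i, if s i then (1:ℕ) else 0) + 1 := by
  classical
  have h1 : (fun i => if Function.update s κ true i then (1:ℕ) else 0)
      = Function.update (fun i => if s i then (1:ℕ) else 0) κ 1 := by
    funext i
    by_cases h : i = κ
    · subst h; simp
    · simp [Function.update_of_ne h]
  rw [h1, Finset.sum_update_of_mem (Finset.mem_univ κ)]
  have h2 : (∑ i, if s i then (1:ℕ) else 0)
      = (∑ i ∈ Finset.univ \ {κ}, if s i then (1:ℕ) else 0) + (if s κ then 1 else 0) := by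
    rw [Finset.sum_eq_sum_sdiff_singleton_add (Finset.mem_univ κ)]
  rw [h2, hκ]
  simp [add_comm]

lemma PP_succ (g : (∀ i, X i) → ℂ) (κ : Fin d) (x₀ x₁ : ∀ i, X i) :
    PP g (κ.1 + 1) x₀ x₁
      = PP g κ.1 x₀ x₁ *
        (starRingEnd ℂ) (PP g κ.1 (Function.update x₀ κ (x₁ κ)) x₁) := by
  classical
  rw [PP, ← Finset.prod_filter_mul_prod_filter_not (FF d (κ.1+1)) (fun s => s κ = false)]
  congr 1
  · rw [FF_succ_filter_false]; rfl
  · rw [PP, map_prod]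
    refine Finset.prod_bij' (fun s _ => Function.update s κ false)
      (fun s _ => Function.update s κ true) ?_ ?_ ?_ ?_ ?_
    · intro s hs
      simp only [mem_filter, mem_FF, Bool.not_eq_false] at hs
      show Function.update s κ false ∈ FF d κ.1
      rw [mem_FF]
      intro i hi
      by_cases h : i = κ
      · subst h; simp
      · rw [Function.update_of_ne h]
        rcases eq_or_lt_of_le hi with h' | h'
        · exact absurd (Fin.ext h'.symm : i = κ) h
        · exact hs.1 i h'
    · intro s hs
      rw [mem_FF] at hs
      show Function.update s κ true ∈ _
      simp only [mem_filter, mem_FF, Bool.not_eq_false]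
      constructor
      · intro i hi
        have hik : i ≠ κ := by
          intro h; subst h; omega
        rw [Function.update_of_ne hik]
        exact hs i (by omega)
      · simp
    · intro s hs
      simp only [mem_filter, Bool.not_eq_false] at hs
      show Function.update (Function.update s κ false) κ true = s
      funext i
      by_cases h : i = κ
      · subst h; simp [hs.2]
      · simp [Function.update_of_ne h]
    · intro s hs
      rw [mem_FF] at hs
      show Function.update (Function.update s κ true) κ false = s
      funext i
      by_cases h : i = κ
      · subst h; simp [hs i le_rfl]
      · simp [Function.update_of_ne h]
    · intro s hs
      simp only [mem_filter, mem_FF, Bool.not_eq_false] at hs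
      set t := Function.update s κ false with ht
      have htκ : t κ = false := by simp [ht]
      have hst : Function.update t κ true = s := by
        funext i
        by_cases h : i = κ
        · subst h; simp [hs.2]
        · simp [ht, Function.update_of_ne h]
      have hw : (∑ i, if s i then (1:ℕ) else 0)
          = (∑ i, if t i then (1:ℕ) else 0) + 1 := by
        conv_lhs => rw [← hst]
        exact wgt_update_true κ htκ
      have harg : (fun i => if s i then x₁ i else x₀ i)
          = fun i => if t i then x₁ i else Function.update x₀ κ (x₁ κ) i := by
        funext i
        by_cases h : i = κ
        · subst h
          simp [hs.2, htκ]
        · have hti : t i = s i := Function.update_of_ne h _ _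
          rw [hti]
          by_cases h2 : s i <;> simp [h2, Function.update_of_ne h]
      rw [hw, conjIter_succ, harg]

lemma FF_zero : FF d 0 = {fun _ => false} := by
  ext s
  simp only [FF, mem_filter, mem_univ, true_and, mem_singleton]
  constructor
  · intro h; funext i; exact h i (Nat.zero_le _)
  · intro h i _; rw [h]

lemma FF_last : FF d d = univ := by
  ext s
  simp only [FF, mem_filter, mem_univ, true_and, iff_true]
  intro i hi; exact absurd i.2 (by omega)

lemma PP_zero (g : (∀ i, X i) → ℂ) (x₀ x₁ : ∀ i, X i) : PP g 0 x₀ x₁ = g x₀ := by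
  rw [PP, FF_zero, prod_singleton]
  simp [conjIter]

noncomputable def SS (g : (∀ i, X i) → ℂ) (k : ℕ) : ℂ := ∑ x₀, ∑ x₁, PP g k x₀ x₁

lemma SS_zero (g : (∀ i, X i) → ℂ) :
    SS g 0 = (Fintype.card (∀ i, X i) : ℂ) * ∑ x, g x := by
  simp only [SS, PP_zero, sum_const, card_univ, nsmul_eq_mul]
  rw [← Finset.mul_sum]

lemma PP_update_right (g : (∀ i, X i) → ℂ) (κ : Fin d) (x₀ x₁ : ∀ i, X i) (b : X κ) :
    PP g κ.1 x₀ (Function.update x₁ κ b) = PP g κ.1 x₀ x₁ := by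
  rw [PP, PP]
  refine Finset.prod_congr rfl fun s hs => ?_
  rw [mem_FF] at hs
  have hsκ : s κ = false := hs κ le_rfl
  have harg : (fun i => if s i then Function.update x₁ κ b i else x₀ i)
      = fun i => if s i then x₁ i else x₀ i := by
    funext i
    by_cases h : i = κ
    · subst h; simp [hsκ]
    · by_cases h2 : s i <;> simp [h2, Function.update_of_ne h]
  rw [harg]
lemma update_piSplitAt_symm (κ : Fin d) (a a' : X κ) (y : ∀ j : {j // j ≠ κ}, X j.1) :
    Function.update ((Equiv.piSplitAt κ X).symm (a', y)) κ a
      = (Equiv.piSplitAt κ X).symm (a, y) := by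
  funext j
  by_cases h : j = κ
  · subst h; simp [Equiv.piSplitAt]
  · simp [Function.update_of_ne h, Equiv.piSplitAt, h]

lemma piSplitAt_symm_self (κ : Fin d) (a : X κ) (y : ∀ j : {j // j ≠ κ}, X j.1) :
    (Equiv.piSplitAt κ X).symm (a, y) κ = a := by
  simp [Equiv.piSplitAt]

lemma SS_step (g : (∀ i, X i) → ℂ) (κ : Fin d) :
    ∃ r : ℝ, 0 ≤ r ∧ SS g (κ.1 + 1) = (r : ℂ) ∧
      ‖SS g κ.1‖ ^ 2 ≤ (Fintype.card (∀ i, X i) : ℝ) ^ 2 * r := by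
  classical
  set Φ : (∀ j : {j // j ≠ κ}, X j.1) → (∀ j : {j // j ≠ κ}, X j.1) → X κ → ℂ :=
    fun y₀ y₁ a => PP g κ.1 ((Equiv.piSplitAt κ X).symm (a, y₀))
      ((Equiv.piSplitAt κ X).symm (a, y₁)) with hΦ
  set T : (∀ j : {j // j ≠ κ}, X j.1) → (∀ j : {j // j ≠ κ}, X j.1) → ℂ := fun y₀ y₁ => ∑ a, Φ y₀ y₁ a with hT
  have hsum : ∀ f : (∀ i, X i) → ℂ, ∑ x, f x = ∑ a, ∑ y, f ((Equiv.piSplitAt κ X).symm (a, y)) := by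
    intro f
    rw [← Equiv.sum_comp (Equiv.piSplitAt κ X).symm f, Fintype.sum_prod_type]
  -- PP is independent of the κ-th coordinate of its second vector argument
  have hindep : ∀ (x₀ : ∀ i, X i) (a a' : X κ) (y : (∀ j : {j // j ≠ κ}, X j.1)),
      PP g κ.1 x₀ ((Equiv.piSplitAt κ X).symm (a, y)) = PP g κ.1 x₀ ((Equiv.piSplitAt κ X).symm (a', y)) := by
    intro x₀ a a' y
    rw [← update_piSplitAt_symm κ a a' y, PP_update_right]
  -- the two representations
  have hrep : ∀ (a₀ a₁ : X κ) (y₀ y₁ : (∀ j : {j // j ≠ κ}, X j.1)),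
      PP g κ.1 ((Equiv.piSplitAt κ X).symm (a₀, y₀)) ((Equiv.piSplitAt κ X).symm (a₁, y₁)) = Φ y₀ y₁ a₀ := by
    intro a₀ a₁ y₀ y₁
    rw [hindep _ a₁ a₀]
  have key1 : SS g (κ.1 + 1) = ∑ y₀, ∑ y₁, (Complex.normSq (T y₀ y₁) : ℂ) := by
    calc SS g (κ.1 + 1)
        = ∑ a₀, ∑ y₀, ∑ a₁, ∑ y₁, Φ y₀ y₁ a₀ * (starRingEnd ℂ) (Φ y₀ y₁ a₁) := by
          rw [SS, hsum]
          refine Finset.sum_congr rfl fun a₀ _ => Finset.sum_congr rfl fun y₀ _ => ?_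
          rw [hsum]
          refine Finset.sum_congr rfl fun a₁ _ => Finset.sum_congr rfl fun y₁ _ => ?_
          rw [PP_succ, hrep, piSplitAt_symm_self, update_piSplitAt_symm, hrep]
      _ = ∑ a₀, ∑ y₀, ∑ y₁, ∑ a₁, Φ y₀ y₁ a₀ * (starRingEnd ℂ) (Φ y₀ y₁ a₁) :=
          Finset.sum_congr rfl fun a₀ _ => Finset.sum_congr rfl fun y₀ _ => Finset.sum_comm
      _ = ∑ y₀, ∑ a₀, ∑ y₁, ∑ a₁, Φ y₀ y₁ a₀ * (starRingEnd ℂ) (Φ y₀ y₁ a₁) :=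
          Finset.sum_comm
      _ = ∑ y₀, ∑ y₁, ∑ a₀, ∑ a₁, Φ y₀ y₁ a₀ * (starRingEnd ℂ) (Φ y₀ y₁ a₁) :=
          Finset.sum_congr rfl fun y₀ _ => Finset.sum_comm
      _ = ∑ y₀, ∑ y₁, (Complex.normSq (T y₀ y₁) : ℂ) := by
          refine Finset.sum_congr rfl fun y₀ _ => Finset.sum_congr rfl fun y₁ _ => ?_
          rw [← Complex.mul_conj, hT]
          rw [map_sum, Finset.sum_mul_sum]
  have key2 : SS g κ.1 = (Fintype.card (X κ) : ℂ) * ∑ y₀, ∑ y₁, T y₀ y₁ := by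
    calc SS g κ.1
        = ∑ a₀, ∑ y₀, ∑ a₁, ∑ y₁, Φ y₀ y₁ a₀ := by
          rw [SS, hsum]
          refine Finset.sum_congr rfl fun a₀ _ => Finset.sum_congr rfl fun y₀ _ => ?_
          rw [hsum]
          exact Finset.sum_congr rfl fun a₁ _ => Finset.sum_congr rfl fun y₁ _ => hrep _ _ _ _
      _ = ∑ a₀, ∑ y₀, (Fintype.card (X κ) : ℂ) * ∑ y₁, Φ y₀ y₁ a₀ := by
          refine Finset.sum_congr rfl fun a₀ _ => Finset.sum_congr rfl fun y₀ _ => ?_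
          rw [Finset.sum_const, card_univ, nsmul_eq_mul]
      _ = (Fintype.card (X κ) : ℂ) * ∑ a₀, ∑ y₀, ∑ y₁, Φ y₀ y₁ a₀ := by
          rw [Finset.mul_sum]
          exact Finset.sum_congr rfl fun a₀ _ => (Finset.mul_sum _ _ _).symm
      _ = (Fintype.card (X κ) : ℂ) * ∑ y₀, ∑ y₁, ∑ a₀, Φ y₀ y₁ a₀ := by
          congr 1
          rw [Finset.sum_comm]
          exact Finset.sum_congr rfl fun y₀ _ => Finset.sum_comm
      _ = (Fintype.card (X κ) : ℂ) * ∑ y₀, ∑ y₁, T y₀ y₁ := rfl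
  refine ⟨∑ y₀, ∑ y₁, Complex.normSq (T y₀ y₁), ?_, ?_, ?_⟩
  · exact Finset.sum_nonneg fun _ _ => Finset.sum_nonneg fun _ _ => Complex.normSq_nonneg _
  · rw [key1]; push_cast; rfl
  · -- Cauchy-Schwarz
    have habs : ‖∑ y₀, ∑ y₁, T y₀ y₁‖ ≤ ∑ y₀, ∑ y₁, ‖T y₀ y₁‖ := by
      refine (norm_sum_le _ _).trans ?_
      exact Finset.sum_le_sum fun y₀ _ => norm_sum_le _ _
    have hcs : (∑ y₀, ∑ y₁, ‖T y₀ y₁‖) ^ 2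
        ≤ (Fintype.card (∀ j : {j // j ≠ κ}, X j.1) : ℝ) ^ 2 * ∑ y₀, ∑ y₁, Complex.normSq (T y₀ y₁) := by
      have h1 : (∑ y₀, ∑ y₁, ‖T y₀ y₁‖)
          = ∑ p : (∀ j : {j // j ≠ κ}, X j.1) × (∀ j : {j // j ≠ κ}, X j.1), ‖T p.1 p.2‖ := (Fintype.sum_prod_type' _).symm
      have h2 : (∑ y₀, ∑ y₁, Complex.normSq (T y₀ y₁))
          = ∑ p : (∀ j : {j // j ≠ κ}, X j.1) × (∀ j : {j // j ≠ κ}, X j.1), ‖T p.1 p.2‖ ^ 2 := by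
        rw [← Fintype.sum_prod_type']
        exact Finset.sum_congr rfl fun p _ => (Complex.sq_norm _).symm
      rw [h1, h2]
      have := sq_sum_le_card_mul_sum_sq (s := (Finset.univ : Finset ((∀ j : {j // j ≠ κ}, X j.1) × (∀ j : {j // j ≠ κ}, X j.1))))
        (f := fun p => ‖T p.1 p.2‖)
      refine this.trans ?_
      apply mul_le_mul_of_nonneg_right
      · simp [Fintype.card_prod, sq]
      · exact Finset.sum_nonneg fun _ _ => sq_nonneg _
    have hnc : (Fintype.card (∀ i, X i) : ℝ)
        = (Fintype.card (X κ) : ℝ) * (Fintype.card (∀ j : {j // j ≠ κ}, X j.1) : ℝ) := by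
      rw [← Nat.cast_mul]
      norm_cast
      rw [Fintype.card_congr (Equiv.piSplitAt κ X), Fintype.card_prod]
    have habs2 : ‖SS g κ.1‖
        = (Fintype.card (X κ) : ℝ) * ‖∑ y₀, ∑ y₁, T y₀ y₁‖ := by
      rw [key2, norm_mul]
      congr 1
      simp
    rw [habs2, mul_pow, hnc, mul_pow, mul_assoc]
    apply mul_le_mul_of_nonneg_left _ (by positivity)
    calc ‖∑ y₀, ∑ y₁, T y₀ y₁‖ ^ 2
        ≤ (∑ y₀, ∑ y₁, ‖T y₀ y₁‖) ^ 2 := by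
          apply pow_le_pow_left₀ (norm_nonneg _) habs
      _ ≤ _ := hcs

lemma SS_chain (g : (∀ i, X i) → ℂ) (k : ℕ) (hk1 : 1 ≤ k) (hkd : k ≤ d) :
    ∃ r : ℝ, 0 ≤ r ∧ SS g k = (r : ℂ) ∧
      (Fintype.card (∀ i, X i) : ℝ) ^ 2 * ‖SS g 0‖ ^ (2 ^ k)
        ≤ (Fintype.card (∀ i, X i) : ℝ) ^ (2 ^ (k + 1)) * r := by
  induction k with
  | zero => omega
  | succ k ih =>
    have hc0 : (0:ℝ) < (Fintype.card (∀ i, X i) : ℝ) := by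
      exact_mod_cast Fintype.card_pos
    set c : ℝ := (Fintype.card (∀ i, X i) : ℝ) with hc
    have hkd' : k < d := by omega
    obtain ⟨r', hr'0, hr'eq, hr'le⟩ := SS_step g (⟨k, hkd'⟩ : Fin d)
    have hr'eq' : SS g (k + 1) = (r' : ℂ) := hr'eq
    have hr'le' : ‖SS g k‖ ^ 2 ≤ c ^ 2 * r' := hr'le
    by_cases hk0 : k = 0
    · subst hk0
      refine ⟨r', hr'0, hr'eq', ?_⟩
      have h1 : c ^ 2 * (‖SS g 0‖ ^ 2) ≤ c ^ 2 * (c ^ 2 * r') :=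
        mul_le_mul_of_nonneg_left hr'le' (by positivity)
      calc c ^ 2 * ‖SS g 0‖ ^ (2 ^ 1)
          = c ^ 2 * (‖SS g 0‖ ^ 2) := by norm_num
        _ ≤ c ^ 2 * (c ^ 2 * r') := h1
        _ = c ^ (2 ^ (0 + 1 + 1)) * r' := by ring
    · obtain ⟨r, hr0, hreq, hrle⟩ := ih (by omega) (by omega)
      refine ⟨r', hr'0, hr'eq', ?_⟩
      have habs : ‖SS g k‖ = r := by
        rw [hreq, Complex.norm_real, Real.norm_eq_abs, abs_of_nonneg hr0]
      set A := ‖SS g 0‖ with hA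
      set B := A ^ (2 ^ k) with hB
      set u := c ^ (2 ^ k) with hu
      have hu0 : 0 < u := by positivity
      have hA0 : 0 ≤ A := norm_nonneg _
      have hB0 : 0 ≤ B := by positivity
      have hexp1 : c ^ (2 ^ (k + 1)) = u ^ 2 := by
        rw [hu, ← pow_mul, ← pow_succ]
      have hexp2 : c ^ (2 ^ (k + 1 + 1)) = u ^ 4 := by
        rw [hu, ← pow_mul]
        congr 1
        rw [pow_succ, pow_succ]
        ring
      have hexpA : A ^ (2 ^ (k + 1)) = B ^ 2 := by
        rw [hB, ← pow_mul, ← pow_succ]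
      rw [hexpA, hexp2]
      rw [hexp1] at hrle
      -- hrle : c^2 * B ≤ u^2 * r
      have h4 : r ^ 2 ≤ c ^ 2 * r' := by rw [← habs] at *; exact hr'le'
      have e1 : (c ^ 2 * B) ^ 2 ≤ (u ^ 2 * r) ^ 2 :=
        pow_le_pow_left₀ (by positivity) hrle 2
      have e2 : c ^ 2 * (c ^ 2 * B ^ 2) ≤ c ^ 2 * (u ^ 4 * r') := by
        nlinarith [sq_nonneg u, sq_nonneg c, mul_le_mul_of_nonneg_left h4
          (show (0:ℝ) ≤ u ^ 4 by positivity)]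
      have := le_of_mul_le_mul_left e2 (by positivity : (0:ℝ) < c ^ 2)
      linarith

lemma gcs_finite (hd : 1 ≤ d) (g : (∀ i, X i) → ℂ) :
    ∃ r : ℝ, 0 ≤ r ∧
      (∑ x₀, ∑ x₁, PP g d x₀ x₁) / (Fintype.card (∀ i, X i) : ℂ) ^ 2 = (r : ℂ) ∧
      ‖(∑ x, g x) / (Fintype.card (∀ i, X i) : ℂ)‖ ^ (2 ^ d) ≤ r := by
  obtain ⟨r, hr0, hreq, hrle⟩ := SS_chain g d hd le_rfl
  have hc0 : (0:ℝ) < (Fintype.card (∀ i, X i) : ℝ) := by exact_mod_cast Fintype.card_pos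
  set c : ℝ := (Fintype.card (∀ i, X i) : ℝ) with hc
  refine ⟨r / c ^ 2, by positivity, ?_, ?_⟩
  · have : (∑ x₀, ∑ x₁, PP g d x₀ x₁) = SS g d := rfl
    rw [this, hreq]
    rw [show ((Fintype.card (∀ i, X i) : ℂ)) = ((c : ℝ) : ℂ) by norm_num [hc]]
    push_cast
    rfl
  · set B := ‖(∑ x, g x) / (Fintype.card (∀ i, X i) : ℂ)‖ with hBd
    have hB0 : 0 ≤ B := norm_nonneg _
    have hSS0 : ‖SS g 0‖ = c ^ 2 * B := by
      rw [SS_zero, norm_mul, hBd, norm_div]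
      have h1 : ‖(Fintype.card (∀ i, X i) : ℂ)‖ = c := by
        simp [hc]
      rw [h1]
      field_simp
    rw [hSS0] at hrle
    have hexp : (c ^ 2 * B) ^ (2 ^ d) = c ^ (2 ^ (d + 1)) * B ^ (2 ^ d) := by
      rw [mul_pow, ← pow_mul, ← pow_succ']
    rw [hexp] at hrle
    -- hrle : c^2 * (c^(2^(d+1)) * B^(2^d)) ≤ c^(2^(d+1)) * r
    have hcd : (0:ℝ) < c ^ (2 ^ (d + 1)) := by positivity
    have h2 : c ^ (2 ^ (d + 1)) * (c ^ 2 * B ^ (2 ^ d)) ≤ c ^ (2 ^ (d + 1)) * r := by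
      calc c ^ (2 ^ (d + 1)) * (c ^ 2 * B ^ (2 ^ d))
          = c ^ 2 * (c ^ (2 ^ (d + 1)) * B ^ (2 ^ d)) := by ring
        _ ≤ c ^ (2 ^ (d + 1)) * r := hrle
    have h3 : c ^ 2 * B ^ (2 ^ d) ≤ r := le_of_mul_le_mul_left h2 hcd
    rw [le_div_iff₀ (by positivity : (0:ℝ) < c ^ 2)]
    linarith

lemma sq_integral_le {Ω : Type*} [MeasurableSpace Ω] (μ : Measure Ω)
    [IsProbabilityMeasure μ] (h : Ω → ℝ) (hm : Measurable h)
    (hb : ∀ ω, |h ω| ≤ 1) :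
    (∫ ω, h ω ∂μ) ^ 2 ≤ ∫ ω, h ω ^ 2 ∂μ := by
  have hmem : MemLp h 2 μ :=
    (memLp_top_of_bound hm.aestronglyMeasurable 1 (ae_of_all _ fun ω => by
      simpa using hb ω)).mono_exponent le_top
  have hv := ProbabilityTheory.variance_nonneg h μ
  rw [ProbabilityTheory.variance_eq_sub hmem] at hv
  have h2 : (∫ ω, (h ^ 2) ω ∂μ) = ∫ ω, h ω ^ 2 ∂μ := by
    refine integral_congr_ae (ae_of_all _ fun ω => ?_)
    simp [pow_two]
  rw [h2] at hv
  linarith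

lemma pow_integral_le {Ω : Type*} [MeasurableSpace Ω] (μ : Measure Ω)
    [IsProbabilityMeasure μ] (h : Ω → ℝ) (hm : Measurable h)
    (h0 : ∀ ω, 0 ≤ h ω) (h1 : ∀ ω, h ω ≤ 1) (n : ℕ) :
    (∫ ω, h ω ∂μ) ^ (2 ^ n) ≤ ∫ ω, h ω ^ (2 ^ n) ∂μ := by
  induction n generalizing h with
  | zero => simp
  | succ n ih =>
    have hint : 0 ≤ ∫ ω, h ω ∂μ := integral_nonneg h0
    have hbase : (∫ ω, h ω ∂μ) ^ 2 ≤ ∫ ω, h ω ^ 2 ∂μ :=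
      sq_integral_le μ h hm fun ω => by rw [abs_of_nonneg (h0 ω)]; exact h1 ω
    have hih := ih (fun ω => h ω ^ 2) (hm.pow_const 2)
      (fun ω => by positivity) (fun ω => pow_le_one₀ (h0 ω) (h1 ω))
    calc (∫ ω, h ω ∂μ) ^ 2 ^ (n + 1)
        = ((∫ ω, h ω ∂μ) ^ 2) ^ 2 ^ n := by
          rw [← pow_mul, ← pow_succ']
      _ ≤ (∫ ω, h ω ^ 2 ∂μ) ^ 2 ^ n := by
          apply pow_le_pow_left₀ (by positivity) hbase
      _ ≤ ∫ ω, (h ω ^ 2) ^ 2 ^ n ∂μ := hih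
      _ = ∫ ω, h ω ^ 2 ^ (n + 1) ∂μ := by
          refine integral_congr_ae (ae_of_all _ fun ω => ?_)
          show (h ω ^ 2) ^ 2 ^ n = h ω ^ 2 ^ (n + 1)
          rw [← pow_mul, ← pow_succ']

lemma integrable_of_bdd {Ω : Type*} [MeasurableSpace Ω] {μ : Measure Ω}
    [IsProbabilityMeasure μ] {f : Ω → ℝ} (hm : Measurable f)
    (hb : ∀ ω, |f ω| ≤ 1) : Integrable f μ :=
  (integrable_const 1).mono' hm.aestronglyMeasurable
    (ae_of_all _ fun ω => by simpa using hb ω)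

end Finite

/-- The Gowers–Cauchy–Schwarz inequality: if `(Ω, μ)` is a probability space,
`X₁, …, X_d` are nonempty finite sets and `G : Ω × X₁ × ⋯ × X_d → ℂ` is measurable
with `|G| ≤ 1`, then
`|E_ω E_x G|^{2^d} ≤ E_ω E_{x⁰,x¹} ∏_{s ∈ {0,1}^d} 𝒞^{|s|} G(ω, x^s)`,
and in particular the right-hand side is a nonnegative real number. -/
theorem gowers_cauchy_schwarz {Ω : Type*} [MeasurableSpace Ω]
    (μ : Measure Ω) [IsProbabilityMeasure μ]
    (d : ℕ) (hd : 1 ≤ d) (X : Fin d → Type*) [∀ i, Fintype (X i)] [∀ i, Nonempty (X i)]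
    (G : Ω → (∀ i, X i) → ℂ)
    (hmeas : ∀ x, Measurable fun ω => G ω x)
    (hbd : ∀ ω x, ‖G ω x‖ ≤ 1) :
    ∃ R : ℝ, 0 ≤ R ∧
      (∫ ω, (∑ x₀ : ∀ i, X i, ∑ x₁ : ∀ i, X i,
          ∏ s : Fin d → Bool,
            conjIter (∑ i, if s i then 1 else 0)
              (G ω fun i => if s i then x₁ i else x₀ i)) /
          ((Fintype.card (∀ i, X i) : ℂ)) ^ 2 ∂μ) = (R : ℂ) ∧
      ‖∫ ω, (∑ x : ∀ i, X i, G ω x) / (Fintype.card (∀ i, X i) : ℂ) ∂μ‖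
          ^ (2 ^ d) ≤ R := by
  classical
  have hc0 : (0:ℝ) < (Fintype.card (∀ i, X i) : ℝ) := by exact_mod_cast Fintype.card_pos
  set I : Ω → ℂ := fun ω => (∑ x₀ : ∀ i, X i, ∑ x₁ : ∀ i, X i,
      ∏ s : Fin d → Bool,
        conjIter (∑ i, if s i then 1 else 0)
          (G ω fun i => if s i then x₁ i else x₀ i)) /
      ((Fintype.card (∀ i, X i) : ℂ)) ^ 2 with hI
  set f : Ω → ℂ := fun ω => (∑ x : ∀ i, X i, G ω x) / (Fintype.card (∀ i, X i) : ℂ)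
    with hf
  -- pointwise facts from the finite Gowers-Cauchy-Schwarz
  have hIeq : ∀ ω, I ω = SS (G ω) d / (Fintype.card (∀ i, X i) : ℂ) ^ 2 := by
    intro ω
    rw [hI]
    simp only
    congr 1
    refine Finset.sum_congr rfl fun x₀ _ => Finset.sum_congr rfl fun x₁ _ => ?_
    rw [PP, FF_last]
  have hpt : ∀ ω, 0 ≤ (I ω).re ∧ I ω = ((I ω).re : ℂ) ∧
      ‖f ω‖ ^ (2 ^ d) ≤ (I ω).re := by
    intro ω
    obtain ⟨r, hr0, hreq, hrle⟩ := gcs_finite hd (G ω)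
    have hIr : I ω = (r : ℂ) := by
      rw [hIeq ω]
      exact hreq
    have hre : (I ω).re = r := by rw [hIr]; simp
    refine ⟨hre ▸ hr0, ?_, ?_⟩
    · rw [hre, hIr]
    · rw [hre]; exact hrle
  -- measurability and bounds
  have hImeas : Measurable I := by
    apply Measurable.div_const
    apply Finset.measurable_sum
    intro x₀ _
    apply Finset.measurable_sum
    intro x₁ _
    apply Finset.measurable_prod
    intro s _
    exact (measurable_conjIter _).comp (hmeas _)
  have hIbd : ∀ ω, ‖I ω‖ ≤ 1 := by
    intro ω
    rw [hI]
    simp only [norm_div]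
    have hnum : ‖∑ x₀ : ∀ i, X i, ∑ x₁ : ∀ i, X i,
        ∏ s : Fin d → Bool,
          conjIter (∑ i, if s i then 1 else 0)
            (G ω fun i => if s i then x₁ i else x₀ i)‖
        ≤ (Fintype.card (∀ i, X i) : ℝ) ^ 2 := by
      refine (norm_sum_le _ _).trans ?_
      have : ∀ x₀ : ∀ i, X i, ‖∑ x₁ : ∀ i, X i,
          ∏ s : Fin d → Bool,
            conjIter (∑ i, if s i then 1 else 0)
              (G ω fun i => if s i then x₁ i else x₀ i)‖ ≤ (Fintype.card (∀ i, X i) : ℝ) := by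
        intro x₀
        refine (norm_sum_le _ _).trans ?_
        have hprod : ∀ x₁ : ∀ i, X i, ‖∏ s : Fin d → Bool,
            conjIter (∑ i, if s i then 1 else 0)
              (G ω fun i => if s i then x₁ i else x₀ i)‖ ≤ 1 := by
          intro x₁
          rw [norm_prod]
          refine Finset.prod_le_one (fun s _ => norm_nonneg _) fun s _ => ?_
          rw [abs_conjIter]
          exact hbd ω _
        refine (Finset.sum_le_sum fun x₁ _ => hprod x₁).trans ?_
        simp
      refine (Finset.sum_le_sum fun x₀ _ => this x₀).trans ?_
      simp [sq]
    have hden : ‖((Fintype.card (∀ i, X i) : ℂ)) ^ 2‖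
        = (Fintype.card (∀ i, X i) : ℝ) ^ 2 := by
      rw [norm_pow, Complex.norm_natCast]
    rw [hden, div_le_one (by positivity)]
    exact hnum
  set ρ : Ω → ℝ := fun ω => (I ω).re with hρ
  have hρmeas : Measurable ρ := Complex.measurable_re.comp hImeas
  have hρbd : ∀ ω, |ρ ω| ≤ 1 := fun ω =>
    (Complex.abs_re_le_norm (I ω)).trans (hIbd ω)
  have hρint : Integrable ρ μ := integrable_of_bdd hρmeas hρbd
  refine ⟨∫ ω, ρ ω ∂μ, ?_, ?_, ?_⟩
  · exact integral_nonneg fun ω => (hpt ω).1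
  · have : (∫ ω, I ω ∂μ) = ∫ ω, ((ρ ω : ℝ) : ℂ) ∂μ :=
      integral_congr_ae (ae_of_all _ fun ω => (hpt ω).2.1)
    rw [show (∫ ω, (∑ x₀ : ∀ i, X i, ∑ x₁ : ∀ i, X i,
          ∏ s : Fin d → Bool,
            conjIter (∑ i, if s i then 1 else 0)
              (G ω fun i => if s i then x₁ i else x₀ i)) /
          ((Fintype.card (∀ i, X i) : ℂ)) ^ 2 ∂μ) = ∫ ω, I ω ∂μ from rfl]
    rw [this]
    exact integral_ofReal
  · have hfbd : ∀ ω, ‖f ω‖ ≤ 1 := by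
      intro ω
      rw [hf]
      simp only
      rw [norm_div]
      have hden : ‖(Fintype.card (∀ i, X i) : ℂ)‖
          = (Fintype.card (∀ i, X i) : ℝ) := Complex.norm_natCast _
      rw [hden, div_le_one hc0]
      refine (norm_sum_le _ _).trans ?_
      calc ∑ x : ∀ i, X i, ‖G ω x‖ ≤ ∑ _x : ∀ i, X i, (1:ℝ) :=
            Finset.sum_le_sum fun x _ => by exact hbd ω x
        _ = (Fintype.card (∀ i, X i) : ℝ) := by
            rw [Finset.sum_const, card_univ, nsmul_eq_mul, mul_one]
    have hfmeas : Measurable f := by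
      apply Measurable.div_const
      exact Finset.measurable_sum _ fun x _ => hmeas x
    have hfint : Integrable f μ := by
      refine (integrable_const (1:ℝ)).mono' hfmeas.aestronglyMeasurable
        (ae_of_all _ fun ω => ?_)
      simpa using hfbd ω
    have step1 : ‖∫ ω, f ω ∂μ‖ ≤ ∫ ω, ‖f ω‖ ∂μ := by
      refine (norm_integral_le_integral_norm _).trans ?_
      refine le_of_eq (integral_congr_ae (ae_of_all _ fun ω => ?_))
      simp
    have step2 : (∫ ω, ‖f ω‖ ∂μ) ^ (2 ^ d)
        ≤ ∫ ω, ‖f ω‖ ^ (2 ^ d) ∂μ :=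
      pow_integral_le μ _ (continuous_norm.measurable.comp hfmeas)
        (fun ω => norm_nonneg _) hfbd d
    have step3 : (∫ ω, ‖f ω‖ ^ (2 ^ d) ∂μ) ≤ ∫ ω, ρ ω ∂μ := by
      refine integral_mono ?_ hρint fun ω => (hpt ω).2.2
      refine integrable_of_bdd ((continuous_norm.measurable.comp hfmeas).pow_const _) ?_
      intro ω
      rw [abs_of_nonneg (by positivity)]
      exact pow_le_one₀ (norm_nonneg _) (hfbd ω)
    calc ‖∫ ω, f ω ∂μ‖ ^ (2 ^ d)
        ≤ (∫ ω, ‖f ω‖ ∂μ) ^ (2 ^ d) :=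
          pow_le_pow_left₀ (norm_nonneg _) step1 _
      _ ≤ ∫ ω, ‖f ω‖ ^ (2 ^ d) ∂μ := step2
      _ ≤ ∫ ω, ρ ω ∂μ := step3
end

section
/- Let U_α be a generalized U-statistic with blocks (S₁, α₁), …, (S_r, α_r). For 1 ≤ a ≤ r let U_α^{0,a} denote the generalized U-statistic built from the first a blocks (S₁, α₁), …, (S_a, α_a), and let U_α^{t,a} denote the one built from the last a blocks (S_{r−a+1}, α_{r−a+1}), …, (S_r, α_r), with the convention U_α^{0,0} = U_α^{t,0} = 1. Then for all 1 ≤ N' ≤ N and every string x ∈ (ℝ^q)^N written as the concatenation x = x₀ ⊕ x_t of its first N' entries x₀ and its last N − N' entries x_t, one has the identity U_α(x) − U_α(x_t) = Σ_{a=1}^{r} U_α^{0,a}(x₀) · U_α^{t,r−a}(x_t). -/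
open MeasureTheory Finset
open scoped Classical

/-- The generalized U-statistic associated to a list of blocks
`B = [(S₁, α₁), …, (S_r, α_r)]`, where `S_k ⊆ {1,…,q}` and `α_k : {1,…,q} → ℕ`:
`U_α(x) = Σ_{1 ≤ ℓ₁ < ⋯ < ℓ_r ≤ N} ∏_{k=1}^r ∏_{c ∈ S_k} (x_{ℓ_k}^{(c)})^{α_k(c)}`. -/
noncomputable def Ustat {q : ℕ} (B : List (Finset (Fin q) × (Fin q → ℕ))) {N : ℕ}
    (x : Fin N → Fin q → ℝ) : ℝ :=
  ∑ ℓ ∈ Finset.univ.filter (fun ℓ : Fin B.length → Fin N => StrictMono ℓ),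
    ∏ k : Fin B.length, ∏ c ∈ (B.get k).1, x (ℓ k) c ^ (B.get k).2 c

/-- A valid block structure for a generalized U-statistic: `r ≥ 1`, each `S_k` is
nonempty, and each exponent `α_k(c)`, `c ∈ S_k`, is a positive integer. -/
def ValidBlocks {q : ℕ} (B : List (Finset (Fin q) × (Fin q → ℕ))) : Prop :=
  B ≠ [] ∧ ∀ p ∈ B, p.1.Nonempty ∧ ∀ c ∈ p.1, 0 < p.2 c

/-- The homogeneous degree of a monomial with exponent vector `β`, with respect to the
weight function `w` assigning a homogeneous degree to each coordinate. -/
def homDeg {q : ℕ} (w : Fin q → ℕ) (β : Fin q → ℕ) : ℕ := ∑ c, w c * β c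

/-- The homogeneous degree `Σ_{k=1}^r Σ_{c ∈ S_k} w(c)·α_k(c)` of a generalized
U-statistic with blocks `B`. -/
def ustatHomDeg {q : ℕ} (w : Fin q → ℕ) (B : List (Finset (Fin q) × (Fin q → ℕ))) : ℕ :=
  (B.map fun p => ∑ c ∈ p.1, w c * p.2 c).sum

/-- `μ` has `d` finite homogeneous moments: `∫ ∏_c |x^{(c)}|^{β_c} dμ < ∞` for every
monomial of homogeneous degree at most `d`. -/
def HasFiniteHomMoments {q : ℕ} (w : Fin q → ℕ) (μ : Measure (Fin q → ℝ)) (d : ℕ) : Prop :=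
  ∀ β : Fin q → ℕ, homDeg w β ≤ d → Integrable (fun x : Fin q → ℝ => ∏ c, |x c| ^ β c) μ

/-- `μ` is centered: every degree-1 coordinate has mean zero. -/
def IsCenteredMeasure {q : ℕ} (w : Fin q → ℕ) (μ : Measure (Fin q → ℝ)) : Prop :=
  ∀ c, w c = 1 → ∫ x, x c ∂μ = 0

lemma card_filter_val_lt (r t : ℕ) :
    (Finset.univ.filter fun k : Fin r => (k : ℕ) < t).card = min t r := by
  rw [← Finset.card_range (min t r)]
  apply Finset.card_bij (fun (k : Fin r) (_ : k ∈ Finset.univ.filter fun k : Fin r => (k : ℕ) < t) => (k : ℕ))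
  · intro k hk; simp only [mem_filter] at hk; simp only [mem_range]
    have := k.isLt; omega
  · intro k _ k' _ h; exact Fin.ext h
  · intro m hm; simp only [mem_range] at hm
    refine ⟨⟨m, by omega⟩, ?_, rfl⟩
    simp only [mem_filter, mem_univ, true_and]; omega

lemma ustat_partition {N r : ℕ} (N' : ℕ) (f : Fin r → Fin N → ℝ) :
    ∑ ℓ ∈ Finset.univ.filter (fun ℓ : Fin r → Fin N => StrictMono ℓ), ∏ k, f k (ℓ k)
    = ∑ a ∈ Finset.range (r + 1),
        ∑ ℓ ∈ Finset.univ.filter (fun ℓ : Fin r → Fin N =>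
          StrictMono ℓ ∧ ∀ k : Fin r, ((ℓ k : ℕ) < N' ↔ (k : ℕ) < a)),
          ∏ k, f k (ℓ k) := by
  rw [← Finset.sum_fiberwise_of_maps_to
    (g := fun ℓ : Fin r → Fin N => (Finset.univ.filter fun k => ((ℓ k : ℕ) < N')).card)
    (t := Finset.range (r + 1))
    (fun ℓ _ => by
      simp only [Finset.mem_range]
      have := Finset.card_filter_le (Finset.univ : Finset (Fin r)) (fun k => ((ℓ k : ℕ) < N'))
      simp only [Finset.card_univ, Fintype.card_fin] at this
      omega)
    (fun ℓ => ∏ k, f k (ℓ k))]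
  refine Finset.sum_congr rfl fun a ha => ?_
  have ha' : a ≤ r := by simp only [Finset.mem_range] at ha; omega
  refine Finset.sum_congr ?_ fun _ _ => rfl
  ext ℓ
  simp only [Finset.mem_filter, Finset.mem_univ, true_and, and_assoc]
  constructor
  · rintro ⟨hsm, hcnt⟩
    refine ⟨hsm, fun k => ⟨fun hlt => ?_, fun hka => ?_⟩⟩
    · have hsub : Finset.Iic k ⊆ Finset.univ.filter fun k' => ((ℓ k' : ℕ) < N') := by
        intro k' hk'
        simp only [Finset.mem_Iic] at hk'
        simp only [Finset.mem_filter, Finset.mem_univ, true_and]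
        have hle : (ℓ k' : ℕ) ≤ (ℓ k : ℕ) := hsm.monotone hk'
        omega
      have hcard := Finset.card_le_card hsub
      rw [hcnt] at hcard
      have hIic : (Finset.Iic k).card = (k : ℕ) + 1 := by simp
      omega
    · by_contra hge
      push_neg at hge
      have hsub : (Finset.univ.filter fun k' => ((ℓ k' : ℕ) < N')) ⊆ Finset.Iio k := by
        intro k' hk'
        simp only [Finset.mem_filter, Finset.mem_univ, true_and] at hk'
        simp only [Finset.mem_Iio]
        by_contra hkk
        push_neg at hkk
        have hle : (ℓ k : ℕ) ≤ (ℓ k' : ℕ) := hsm.monotone hkk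
        omega
      have hcard := Finset.card_le_card hsub
      rw [hcnt] at hcard
      have hIio : (Finset.Iio k).card = (k : ℕ) := by simp
      omega
  · rintro ⟨hsm, hiff⟩
    refine ⟨hsm, ?_⟩
    have heq : (Finset.univ.filter fun k : Fin r => ((ℓ k : ℕ) < N'))
        = Finset.univ.filter fun k : Fin r => (k : ℕ) < a :=
      Finset.filter_congr fun k _ => by rw [hiff k]
    rw [heq, card_filter_val_lt]
    omega

set_option maxHeartbeats 1000000 in
lemma ustat_key {N N' r : ℕ} (h2 : N' ≤ N) (f : Fin r → Fin N → ℝ)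
    (a m n : ℕ) (ha : a ≤ r) (hm : m = a) (hn : n = r - a) :
    ∑ ℓ ∈ Finset.univ.filter (fun ℓ : Fin r → Fin N =>
        StrictMono ℓ ∧ ∀ k : Fin r, ((ℓ k : ℕ) < N' ↔ (k : ℕ) < a)),
      ∏ k, f k (ℓ k)
    = (∑ g ∈ Finset.univ.filter (fun g : Fin m → Fin N' => StrictMono g),
        ∏ k : Fin m, f ⟨k, by have := k.isLt; omega⟩ ⟨g k, by have := (g k).isLt; omega⟩)
      * (∑ h ∈ Finset.univ.filter (fun h : Fin n → Fin (N - N') => StrictMono h),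
        ∏ j : Fin n, f ⟨a + j, by have := j.isLt; omega⟩
          ⟨N' + h j, by have := (h j).isLt; omega⟩) := by
  rw [Finset.sum_mul_sum, ← Finset.sum_product']
  have hr : r = m + n := by omega
  refine Finset.sum_bij'
    (fun (ℓ : Fin r → Fin N) hℓ =>
      ((fun k : Fin m => (⟨(ℓ ⟨(k : ℕ), by have := k.isLt; omega⟩ : ℕ), by
          have hk : ((k : ℕ)) < a := by have := k.isLt; omega
          have hiff := (Finset.mem_filter.1 hℓ).2.2 ⟨(k : ℕ), by omega⟩
          exact hiff.2 hk⟩ : Fin N')),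
       (fun j : Fin n => (⟨(ℓ ⟨a + (j : ℕ), by have := j.isLt; omega⟩ : ℕ) - N', by
          have hj' : a + (j : ℕ) < r := by have := j.isLt; omega
          have hiff := (Finset.mem_filter.1 hℓ).2.2 ⟨a + (j : ℕ), hj'⟩
          have hge : ¬ ((ℓ ⟨a + (j : ℕ), hj'⟩ : ℕ) < N') := fun hc => by
            have h3 : a + (j : ℕ) < a := hiff.1 hc
            omega
          have hlt := (ℓ ⟨a + (j : ℕ), hj'⟩).isLt
          exact (by omega : (ℓ ⟨a + (j : ℕ), hj'⟩ : ℕ) - N' < N - N')⟩ : Fin (N - N')))))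
    (fun p hp => (fun k : Fin r => if hk : (k : ℕ) < a
        then (⟨(p.1 ⟨(k : ℕ), by omega⟩ : ℕ), by
          have := (p.1 ⟨(k : ℕ), by omega⟩).isLt; omega⟩ : Fin N)
        else (⟨N' + (p.2 ⟨(k : ℕ) - a, by have := k.isLt; omega⟩ : ℕ), by
          have := (p.2 ⟨(k : ℕ) - a, by have := k.isLt; omega⟩).isLt; omega⟩ : Fin N)))
    ?_ ?_ ?_ ?_ ?_
  · -- maps to
    intro ℓ hℓ
    obtain ⟨hsm, hiff⟩ := (Finset.mem_filter.1 hℓ).2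
    simp only [Finset.mem_product, Finset.mem_filter, Finset.mem_univ, true_and]
    constructor
    · intro k k' hkk'
      have hkk : (k : ℕ) < (k' : ℕ) := hkk'
      exact (hsm (show (⟨(k : ℕ), by have := k.isLt; omega⟩ : Fin r) <
        ⟨(k' : ℕ), by have := k'.isLt; omega⟩ from hkk) : _)
    · intro j j' hjj'
      have hj1 : a + (j : ℕ) < r := by have := j.isLt; omega
      have hj2 : a + (j' : ℕ) < r := by have := j'.isLt; omega
      have hjj : (j : ℕ) < (j' : ℕ) := hjj'
      have hmono : (ℓ ⟨a + (j : ℕ), hj1⟩ : ℕ) < (ℓ ⟨a + (j' : ℕ), hj2⟩ : ℕ) :=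
        hsm (show a + (j : ℕ) < a + (j' : ℕ) by omega)
      have hge1 : ¬ ((ℓ ⟨a + (j : ℕ), hj1⟩ : ℕ) < N') := fun hc => by
        have h3 : a + (j : ℕ) < a := (hiff _).1 hc
        omega
      exact (show (ℓ ⟨a + (j : ℕ), hj1⟩ : ℕ) - N' < (ℓ ⟨a + (j' : ℕ), hj2⟩ : ℕ) - N'
        by omega : _)
  · -- maps back
    intro p hp
    simp only [Finset.mem_product, Finset.mem_filter, Finset.mem_univ, true_and] at hp
    obtain ⟨hg, hh⟩ := hp
    simp only [Finset.mem_filter, Finset.mem_univ, true_and]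
    constructor
    · intro k k' hkk'
      have hkk : (k : ℕ) < (k' : ℕ) := hkk'
      by_cases hk : (k : ℕ) < a <;> by_cases hk' : (k' : ℕ) < a
      · simp only [dif_pos hk, dif_pos hk']
        exact (hg (show (⟨(k : ℕ), by omega⟩ : Fin m) < ⟨(k' : ℕ), by omega⟩ from hkk) : _)
      · simp only [dif_pos hk, dif_neg hk']
        have hlt := (p.1 ⟨(k : ℕ), by omega⟩).isLt
        exact (show ((p.1 ⟨(k : ℕ), by omega⟩ : Fin N') : ℕ) <
          N' + ((p.2 ⟨(k' : ℕ) - a, by have := k'.isLt; omega⟩ : Fin (N - N')) : ℕ) by omega : _)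
      · omega
      · simp only [dif_neg hk, dif_neg hk']
        have h4 : ((p.2 ⟨(k : ℕ) - a, by have := k.isLt; omega⟩ : Fin (N - N')) : ℕ) <
            ((p.2 ⟨(k' : ℕ) - a, by have := k'.isLt; omega⟩ : Fin (N - N')) : ℕ) :=
          hh (show (⟨(k : ℕ) - a, by have := k.isLt; omega⟩ : Fin n) <
            ⟨(k' : ℕ) - a, by have := k'.isLt; omega⟩ from
            (by omega : (k : ℕ) - a < (k' : ℕ) - a))
        exact (show N' + ((p.2 ⟨(k : ℕ) - a, by have := k.isLt; omega⟩ : Fin (N - N')) : ℕ) <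
          N' + ((p.2 ⟨(k' : ℕ) - a, by have := k'.isLt; omega⟩ : Fin (N - N')) : ℕ) by omega : _)
    · intro k
      by_cases hk : (k : ℕ) < a
      · simp only [dif_pos hk]
        exact ⟨fun _ => hk, fun _ => (p.1 ⟨(k : ℕ), by omega⟩).isLt⟩
      · simp only [dif_neg hk]
        refine ⟨fun hcon => ?_, fun hcon => absurd hcon hk⟩
        have : N' + ((p.2 ⟨(k : ℕ) - a, by have := k.isLt; omega⟩ : Fin (N - N')) : ℕ) < N' :=
          hcon
        omega
  · -- left inverse
    intro ℓ hℓ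
    obtain ⟨hsm, hiff⟩ := (Finset.mem_filter.1 hℓ).2
    funext k
    by_cases hk : (k : ℕ) < a
    · simp only [dif_pos hk]
    · simp only [dif_neg hk]
      have hk' : a + ((k : ℕ) - a) < r := by have := k.isLt; omega
      have heq : (⟨a + ((k : ℕ) - a), hk'⟩ : Fin r) = k :=
        Fin.ext ((by omega : a + ((k : ℕ) - a) = (k : ℕ)) : _)
      have hge : ¬ ((ℓ k : ℕ) < N') := fun hc => by
        have := (hiff k).1 hc; omega
      apply Fin.ext
      show N' + ((ℓ ⟨a + ((k : ℕ) - a), hk'⟩ : ℕ) - N') = (ℓ k : ℕ)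
      rw [heq]
      omega
  · -- right inverse
    intro p hp
    refine Prod.ext ?_ ?_
    · funext k
      have hk : (k : ℕ) < a := by have := k.isLt; omega
      apply Fin.ext
      show ((if hk : (k : ℕ) < a then _ else _ : Fin N) : ℕ) = _
      rw [dif_pos hk]
    · funext j
      have hk : ¬ (a + (j : ℕ) < a) := by omega
      apply Fin.ext
      show ((if hk : (a + (j : ℕ)) < a then _ else _ : Fin N) : ℕ) - N' = _
      rw [dif_neg hk]
      have heq : (⟨(a + (j : ℕ)) - a, by have := j.isLt; omega⟩ : Fin n) = j :=
        Fin.ext ((by omega : a + (j : ℕ) - a = (j : ℕ)) : _)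
      simp only [Fin.val_mk, heq]
      show N' + ((p.2 j : Fin (N - N')) : ℕ) - N' = ((p.2 j : Fin (N - N')) : ℕ)
      omega
  · -- values
    intro ℓ hℓ
    obtain ⟨hsm, hiff⟩ := (Finset.mem_filter.1 hℓ).2
    have hsplit : ∀ F : Fin r → ℝ, ∏ k : Fin r, F k =
        (∏ k : Fin m, F ⟨(k : ℕ), by have := k.isLt; omega⟩) *
        ∏ j : Fin n, F ⟨a + (j : ℕ), by have := j.isLt; omega⟩ := by
      intro F
      rw [← Fintype.prod_equiv (finCongr hr.symm) (fun k : Fin (m + n) => F (Fin.cast hr.symm k))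
        F (fun k => rfl), Fin.prod_univ_add]
      refine congrArg₂ (· * ·) (Finset.prod_congr rfl fun k _ => rfl)
        (Finset.prod_congr rfl fun j _ => ?_)
      exact congrArg F (Fin.ext (by simp [hm]))
    rw [hsplit (fun k => f k (ℓ k))]
    refine congrArg₂ (· * ·) (Finset.prod_congr rfl fun k _ => rfl)
      (Finset.prod_congr rfl fun j _ => ?_)
    · 
      have hj' : a + (j : ℕ) < r := by have := j.isLt; omega
      have hge : ¬ ((ℓ ⟨a + (j : ℕ), hj'⟩ : ℕ) < N') := fun hc => by
        have h3 : a + (j : ℕ) < a := (hiff _).1 hc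
        omega
      congr 1
      apply Fin.ext
      show (ℓ ⟨a + (j : ℕ), hj'⟩ : ℕ) = N' + ((ℓ ⟨a + (j : ℕ), hj'⟩ : ℕ) - N')
      omega

lemma Ustat_nil {q N : ℕ} (y : Fin N → Fin q → ℝ) :
    Ustat ([] : List (Finset (Fin q) × (Fin q → ℕ))) y = 1 := by
  unfold Ustat
  rw [show (Finset.univ.filter
      (fun ℓ : Fin ([] : List (Finset (Fin q) × (Fin q → ℕ))).length → Fin N => StrictMono ℓ))
      = Finset.univ from Finset.filter_true_of_mem (fun f _ => fun a _ _ => a.elim0)]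
  simp

set_option maxHeartbeats 1000000 in
/-- Decomposition of a generalized U-statistic over a split of the string:
`U_α(x) − U_α(x_t) = Σ_{a=1}^r U_α^{0,a}(x₀) · U_α^{t,r−a}(x_t)`, where `x₀` is the
first `N'` entries of `x`, `x_t` the last `N − N'` entries, `U_α^{0,a}` is built from
the first `a` blocks and `U_α^{t,r−a}` from the last `r − a` blocks (with the
convention that the empty U-statistic is `1`). -/
theorem ustat_split {q : ℕ} (hq : 1 ≤ q)
    (B : List (Finset (Fin q) × (Fin q → ℕ))) (hr : 1 ≤ B.length)
    (hS : ∀ p ∈ B, p.1.Nonempty) (hα : ∀ p ∈ B, ∀ c ∈ p.1, 0 < p.2 c)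
    (N N' : ℕ) (h1 : 1 ≤ N') (h2 : N' ≤ N) (x : Fin N → Fin q → ℝ) :
    Ustat B x -
        Ustat B (fun i : Fin (N - N') => x (Fin.cast (by omega) (Fin.natAdd N' i))) =
      ∑ a ∈ Finset.Icc 1 B.length,
        Ustat (B.take a) (fun i : Fin N' => x (Fin.castLE h2 i)) *
          Ustat (B.drop a)
            (fun i : Fin (N - N') => x (Fin.cast (by omega) (Fin.natAdd N' i))) := by
  have hNN : N' + (N - N') = N := by omega
  have hstep : ∀ a ≤ B.length,
      (∑ ℓ ∈ Finset.univ.filter (fun ℓ : Fin B.length → Fin N =>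
        StrictMono ℓ ∧ ∀ k : Fin B.length, ((ℓ k : ℕ) < N' ↔ (k : ℕ) < a)),
        ∏ k, (fun (k : Fin B.length) (i : Fin N) =>
          ∏ c ∈ (B.get k).1, x i c ^ (B.get k).2 c) k (ℓ k))
      = Ustat (B.take a) (fun i : Fin N' => x (Fin.castLE h2 i)) *
        Ustat (B.drop a) (fun i : Fin (N - N') => x (Fin.cast (by omega) (Fin.natAdd N' i))) := by
    intro a ha
    rw [ustat_key h2 (fun (k : Fin B.length) (i : Fin N) =>
        ∏ c ∈ (B.get k).1, x i c ^ (B.get k).2 c) a (B.take a).length (B.drop a).length ha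
      (by rw [List.length_take]; omega) (by rw [List.length_drop])]
    congr 1
    · refine Finset.sum_congr rfl fun g _ => Finset.prod_congr rfl fun k _ => ?_
      have hk' : (k : ℕ) < B.length := by
        have h3 := k.isLt
        have h4 : (List.take a B).length = min a B.length := by simp
        omega
      have hBk : (B.take a).get k = B.get ⟨(k : ℕ), hk'⟩ := by
        simp [List.get_eq_getElem, List.getElem_take]
      show (∏ c ∈ (B.get ⟨(k : ℕ), _⟩).1,
          x ⟨(g k : ℕ), _⟩ c ^ (B.get ⟨(k : ℕ), _⟩).2 c)
        = ∏ c ∈ ((B.take a).get k).1,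
            (fun i : Fin N' => x (Fin.castLE h2 i)) (g k) c ^ ((B.take a).get k).2 c
      rw [hBk]
      rfl
    · refine Finset.sum_congr rfl fun h _ => Finset.prod_congr rfl fun j _ => ?_
      have hj' : a + (j : ℕ) < B.length := by
        have h3 := j.isLt
        have h4 : (List.drop a B).length = B.length - a := by simp
        omega
      have hBj : (B.drop a).get j = B.get ⟨a + (j : ℕ), hj'⟩ := by
        simp [List.get_eq_getElem, List.getElem_drop]
      show (∏ c ∈ (B.get ⟨a + (j : ℕ), _⟩).1,
          x ⟨N' + (h j : ℕ), _⟩ c ^ (B.get ⟨a + (j : ℕ), _⟩).2 c)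
        = ∏ c ∈ ((B.drop a).get j).1,
            (fun i : Fin (N - N') => x (Fin.cast (by omega) (Fin.natAdd N' i))) (h j) c
              ^ ((B.drop a).get j).2 c
      rw [hBj]
      rfl
  have hmain : Ustat B x
      = ∑ a ∈ Finset.range (B.length + 1),
          Ustat (B.take a) (fun i : Fin N' => x (Fin.castLE h2 i)) *
          Ustat (B.drop a)
            (fun i : Fin (N - N') => x (Fin.cast (by omega) (Fin.natAdd N' i))) :=
    calc Ustat B x
        = ∑ a ∈ Finset.range (B.length + 1),
            ∑ ℓ ∈ Finset.univ.filter (fun ℓ : Fin B.length → Fin N =>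
              StrictMono ℓ ∧ ∀ k : Fin B.length, ((ℓ k : ℕ) < N' ↔ (k : ℕ) < a)),
              ∏ k, (fun (k : Fin B.length) (i : Fin N) =>
                ∏ c ∈ (B.get k).1, x i c ^ (B.get k).2 c) k (ℓ k) :=
        ustat_partition N' (fun (k : Fin B.length) (i : Fin N) =>
          ∏ c ∈ (B.get k).1, x i c ^ (B.get k).2 c)
      _ = _ := Finset.sum_congr rfl fun a ha =>
          hstep a (by simp only [Finset.mem_range] at ha; omega)
  have hins : Finset.range (B.length + 1) = insert 0 (Finset.Icc 1 B.length) := by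
    ext i; simp only [Finset.mem_range, Finset.mem_insert, Finset.mem_Icc]; omega
  rw [hmain, hins, Finset.sum_insert (by simp), List.take_zero, List.drop_zero,
    Ustat_nil, one_mul]
  exact add_sub_cancel_left _ _
end

section
/- Let m, n, N ≥ 1 and let μ be a centered Borel probability measure on ℝ^q with 2mn finite homogeneous moments. Then for every generalized U-statistic U_α of homogeneous degree n there exists a constant C = C(μ, q, m, n) > 0, independent of N, such that E_{x ∼ μ^{⊗N}}[ |U_α(x)|^{2m} ] ≤ C · N^{mn}. -/
open MeasureTheory Finset
open scoped Classical

namespace UstatAux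

variable {q : ℕ}

/-- The monomial with exponent vector `β`. -/
noncomputable def mono (β : Fin q → ℕ) (y : Fin q → ℝ) : ℝ := ∏ c, y c ^ β c

lemma measurable_mono (β : Fin q → ℕ) : Measurable (mono β) :=
  Finset.measurable_prod _ fun c _ => (measurable_pi_apply c).pow_const _

lemma abs_mono (β : Fin q → ℕ) (y : Fin q → ℝ) : |mono β y| = ∏ c, |y c| ^ β c := by
  rw [mono, Finset.abs_prod]
  exact Finset.prod_congr rfl fun c _ => (abs_pow _ _)

lemma mono_zero (y : Fin q → ℝ) : mono 0 y = 1 := by simp [mono]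

lemma integrable_mono {μ : Measure (Fin q → ℝ)} {w : Fin q → ℕ} {d : ℕ}
    (hmom : HasFiniteHomMoments w μ d) {β : Fin q → ℕ} (hβ : homDeg w β ≤ d) :
    Integrable (mono β) μ := by
  refine (hmom β hβ).mono' (measurable_mono β).aestronglyMeasurable ?_
  filter_upwards with y
  rw [Real.norm_eq_abs, abs_mono]

lemma homDeg_mono (w : Fin q → ℕ) {β β' : Fin q → ℕ} (h : ∀ c, β c ≤ β' c) :
    homDeg w β ≤ homDeg w β' :=
  Finset.sum_le_sum fun c _ => Nat.mul_le_mul_left _ (h c)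

lemma homDeg_eq_zero {w : Fin q → ℕ} {β : Fin q → ℕ} (h : β = 0) : homDeg w β = 0 := by
  simp [homDeg, h]

lemma apply_le_homDeg {w : Fin q → ℕ} (hw : ∀ c, 1 ≤ w c) (β : Fin q → ℕ) (c : Fin q) :
    β c ≤ homDeg w β := by
  calc β c = 1 * β c := (one_mul _).symm
  _ ≤ w c * β c := Nat.mul_le_mul_right _ (hw c)
  _ ≤ homDeg w β := by
    rw [homDeg]
    exact Finset.single_le_sum (f := fun c => w c * β c) (fun _ _ => Nat.zero_le _)
      (Finset.mem_univ c)

lemma integral_mono_eq_zero {μ : Measure (Fin q → ℝ)} {w : Fin q → ℕ}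
    (hw : ∀ c, 1 ≤ w c) (hcent : IsCenteredMeasure w μ)
    {β : Fin q → ℕ} (hβ : homDeg w β = 1) : ∫ y, mono β y ∂μ = 0 := by
  have hne : ∑ c, w c * β c ≠ 0 := by rw [← homDeg, hβ]; omega
  obtain ⟨c0, -, hc0⟩ := Finset.exists_ne_zero_of_sum_ne_zero hne
  have hle : w c0 * β c0 ≤ 1 := hβ ▸ Finset.single_le_sum
    (f := fun c => w c * β c) (fun _ _ => Nat.zero_le _) (Finset.mem_univ c0)
  have h1 : w c0 * β c0 = 1 := by omega
  have hw0 : w c0 = 1 := Nat.dvd_one.mp ⟨β c0, h1.symm⟩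
  have hb0 : β c0 = 1 := Nat.dvd_one.mp ⟨w c0, by rw [← h1, mul_comm]⟩
  have hsum : ∑ c, w c * β c = 1 := hβ
  have hrest : ∀ c, c ≠ c0 → β c = 0 := by
    intro c hc
    have key := Finset.add_sum_erase Finset.univ (fun c => w c * β c) (Finset.mem_univ c0)
    beta_reduce at key
    have h2 : ∑ c ∈ Finset.univ.erase c0, w c * β c = 0 := by omega
    have h3 := (Finset.sum_eq_zero_iff.mp h2) c (Finset.mem_erase.mpr ⟨hc, Finset.mem_univ c⟩)
    beta_reduce at h3
    rcases Nat.mul_eq_zero.mp h3 with h | h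
    · exact absurd h (by have := hw c; omega)
    · exact h
  have hmono : ∀ y : Fin q → ℝ, mono β y = y c0 := by
    intro y
    rw [mono, Finset.prod_eq_single c0 (fun c _ hc => by rw [hrest c hc, pow_zero])
      (fun h => absurd (Finset.mem_univ c0) h), hb0, pow_one]
  calc ∫ y, mono β y ∂μ = ∫ y, y c0 ∂μ := by
        exact integral_congr_ae (Filter.Eventually.of_forall hmono)
  _ = 0 := hcent c0 hw0

lemma prod_mono_fiber {ι : Type*} [Fintype ι] {N : ℕ} (E : ι → Fin q → ℕ) (V : ι → Fin N)
    (x : Fin N → Fin q → ℝ) :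
    ∏ p, mono (E p) (x (V p)) =
      ∏ i, mono (fun c => ∑ p ∈ Finset.univ.filter fun p => V p = i, E p c) (x i) := by
  rw [← Finset.prod_fiberwise_of_maps_to (fun p _ => Finset.mem_univ (V p))
    (fun p => mono (E p) (x (V p)))]
  refine Finset.prod_congr rfl fun i _ => ?_
  calc ∏ p ∈ Finset.univ.filter fun p => V p = i, mono (E p) (x (V p))
      = ∏ p ∈ Finset.univ.filter fun p => V p = i, ∏ c, x i c ^ E p c := by
        refine Finset.prod_congr rfl fun p hp => ?_
        rw [mono, (Finset.mem_filter.mp hp).2]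
    _ = ∏ c, ∏ p ∈ Finset.univ.filter fun p => V p = i, x i c ^ E p c := Finset.prod_comm
    _ = _ := by
        rw [mono]
        exact Finset.prod_congr rfl fun c _ => Finset.prod_pow_eq_pow_sum _ _ _

lemma sum_homDeg_fiber {ι : Type*} [Fintype ι] {N : ℕ} (w : Fin q → ℕ)
    (E : ι → Fin q → ℕ) (V : ι → Fin N) :
    ∑ i, homDeg w (fun c => ∑ p ∈ Finset.univ.filter fun p => V p = i, E p c) =
      ∑ p, homDeg w (E p) := by
  rw [← Finset.sum_fiberwise_of_maps_to (fun p _ => Finset.mem_univ (V p))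
    (fun p => homDeg w (E p))]
  refine Finset.sum_congr rfl fun i _ => ?_
  rw [homDeg]
  simp only [Finset.mul_sum, homDeg]
  exact Finset.sum_comm

/-- Combined exponent vector at site `i` from blocks `e` placed at positions `L`. -/
def betaF {q r M N : ℕ} (e : Fin r → Fin q → ℕ)
    (L : Fin M → Fin r → Fin N) (i : Fin N) (c : Fin q) : ℕ :=
  ∑ p ∈ Finset.univ.filter (fun p : Fin M × Fin r => L p.1 p.2 = i), e p.2 c

lemma prod_mono_betaF {r M N : ℕ} (e : Fin r → Fin q → ℕ)
    (L : Fin M → Fin r → Fin N) (x : Fin N → Fin q → ℝ) :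
    ∏ p : Fin M × Fin r, mono (e p.2) (x (L p.1 p.2)) =
      ∏ i, mono (betaF e L i) (x i) :=
  prod_mono_fiber (fun p : Fin M × Fin r => e p.2) (fun p => L p.1 p.2) x

lemma sum_homDeg_betaF {r M N : ℕ} (w : Fin q → ℕ) (e : Fin r → Fin q → ℕ)
    (L : Fin M → Fin r → Fin N) :
    ∑ i, homDeg w (betaF e L i) = ∑ p : Fin M × Fin r, homDeg w (e p.2) :=
  sum_homDeg_fiber w (fun p : Fin M × Fin r => e p.2) (fun p => L p.1 p.2)

lemma le_betaF {r M N : ℕ} (e : Fin r → Fin q → ℕ)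
    (L : Fin M → Fin r → Fin N) (j : Fin M) (k : Fin r) (c : Fin q) :
    e k c ≤ betaF e L (L j k) c := by
  unfold betaF
  refine Finset.single_le_sum (f := fun p : Fin M × Fin r => e p.2 c)
    (fun _ _ => Nat.zero_le _) (a := ((j, k) : Fin M × Fin r)) ?_
  simp

end UstatAux

open UstatAux

set_option maxHeartbeats 1000000 in
/-- Let `m, n ≥ 1` and let `μ` be a centered Borel probability measure on `ℝ^q` with
`2mn` finite homogeneous moments.  For every generalized U-statistic `U_α` of
homogeneous degree `n` there is a constant `C = C(μ, q, m, n) > 0`, independent of `N`,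
such that `E_{x ∼ μ^{⊗N}}[|U_α(x)|^{2m}] ≤ C · N^{mn}` for all `N ≥ 1`. -/
theorem ustat_moment_bound {q s : ℕ} (hq : 1 ≤ q) (hs : 1 ≤ s)
    (w : Fin q → ℕ) (hw : ∀ c, 1 ≤ w c ∧ w c ≤ s)
    (m n : ℕ) (hm : 1 ≤ m) (hn : 1 ≤ n)
    (μ : Measure (Fin q → ℝ)) [IsProbabilityMeasure μ]
    (hcent : IsCenteredMeasure w μ)
    (hmom : HasFiniteHomMoments w μ (2 * m * n))
    (B : List (Finset (Fin q) × (Fin q → ℕ))) (hB : ValidBlocks B)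
    (hdeg : ustatHomDeg w B = n) :
    ∃ C : ℝ, 0 < C ∧ ∀ N : ℕ, 1 ≤ N →
      (∫ x, |Ustat B x| ^ (2 * m) ∂(Measure.pi fun _ : Fin N => μ)) ≤
        C * (N : ℝ) ^ (m * n) := by
  classical
  obtain ⟨hBne, hBval⟩ := hB
  have hw1 : ∀ c, 1 ≤ w c := fun c => (hw c).1
  set r := B.length with hrdef
  set e : Fin r → Fin q → ℕ :=
    fun k c => if c ∈ (B.get k).1 then (B.get k).2 c else 0 with he
  -- degree of each block
  have hblockdeg : ∀ k : Fin r, homDeg w (e k) = ∑ c ∈ (B.get k).1, w c * (B.get k).2 c := by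
    intro k
    show (∑ c, w c * e k c) = _
    rw [← Finset.sum_subset (Finset.subset_univ (B.get k).1)
      (fun c _ hc => by simp only [he]; rw [if_neg hc, mul_zero])]
    exact Finset.sum_congr rfl fun c hc => by simp only [he]; rw [if_pos hc]
  have hdegsum : ∑ k : Fin r, homDeg w (e k) = n := by
    rw [← hdeg, ustatHomDeg]
    have hmap : B.map (fun p => ∑ c ∈ p.1, w c * p.2 c)
        = List.ofFn (fun k : Fin r => ∑ c ∈ (B.get k).1, w c * (B.get k).2 c) := by
      conv_lhs => rw [← List.ofFn_get B, List.map_ofFn]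
      rfl
    rw [hmap, List.sum_ofFn]
    exact Finset.sum_congr rfl fun k _ => hblockdeg k
  -- every block has degree at least one
  have hek1 : ∀ k : Fin r, 1 ≤ homDeg w (e k) := by
    intro k
    obtain ⟨⟨c, hc⟩, hpos⟩ := hBval (B.get k) (List.get_mem B k)
    have hec : 1 ≤ e k c := by
      simp only [he, if_pos hc]
      exact hpos c hc
    calc 1 = 1 * 1 := (one_mul 1).symm
    _ ≤ w c * e k c := Nat.mul_le_mul (hw1 c) hec
    _ ≤ homDeg w (e k) := by
      rw [homDeg]
      exact Finset.single_le_sum (f := fun c => w c * e k c) (fun _ _ => Nat.zero_le _)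
        (Finset.mem_univ c)
  -- the moment constant
  set G : Finset (Fin q → ℕ) :=
    (Fintype.piFinset fun _ : Fin q => Finset.range (2 * m * n + 1)).filter
      (fun β => homDeg w β ≤ 2 * m * n) with hG
  set K : ℝ := 1 + ∑ β ∈ G, ∫ y, ∏ c, |y c| ^ β c ∂μ with hK
  have hGnn : ∀ β ∈ G, (0:ℝ) ≤ ∫ y, ∏ c, |y c| ^ β c ∂μ := fun β _ =>
    integral_nonneg fun y => Finset.prod_nonneg fun c _ => pow_nonneg (abs_nonneg _) _
  have hK1 : 1 ≤ K := by
    have := Finset.sum_nonneg hGnn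
    rw [hK]; linarith
  have hKb : ∀ β : Fin q → ℕ, homDeg w β ≤ 2 * m * n →
      |∫ y, mono β y ∂μ| ≤ K := by
    intro β hβ
    have hmemG : β ∈ G := by
      rw [hG]
      refine Finset.mem_filter.mpr ⟨Fintype.mem_piFinset.mpr fun c => ?_, hβ⟩
      refine Finset.mem_range.mpr ?_
      have := apply_le_homDeg hw1 β c
      omega
    have h1 : |∫ y, mono β y ∂μ| ≤ ∫ y, |mono β y| ∂μ := by
      have := norm_integral_le_integral_norm (μ := μ) (f := fun y => mono β y)
      simpa [Real.norm_eq_abs] using this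
    have h2 : ∫ y, |mono β y| ∂μ = ∫ y, ∏ c, |y c| ^ β c ∂μ :=
      integral_congr_ae (Filter.Eventually.of_forall fun y => abs_mono β y)
    have h3 : (∫ y, ∏ c, |y c| ^ β c ∂μ) ≤ ∑ β' ∈ G, ∫ y, ∏ c, |y c| ^ β' c ∂μ :=
      Finset.single_le_sum hGnn hmemG
    rw [hK]; linarith
  set D := m * n with hD
  have hDpos : 0 < D := Nat.mul_pos hm hn
  have hKpos : (0:ℝ) < K := lt_of_lt_of_le one_pos hK1
  refine ⟨((D:ℝ) + 1) * ((D:ℝ) ^ r) ^ (2 * m) * K ^ D, ?_, ?_⟩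
  · have hDr : (0:ℝ) < (D:ℝ) := by exact_mod_cast hDpos
    have h1 : (0:ℝ) < (D:ℝ) + 1 := by positivity
    exact mul_pos (mul_pos h1 (pow_pos (pow_pos hDr r) _)) (pow_pos hKpos D)
  intro N hN
  letI : MeasureSpace (Fin q → ℝ) := ⟨μ⟩
  letI : SigmaFinite (volume : Measure (Fin q → ℝ)) := inferInstanceAs (SigmaFinite μ)
  have hPvol : (Measure.pi fun _ : Fin N => μ) = (volume : Measure (Fin N → Fin q → ℝ)) := rfl
  set A : Finset (Fin r → Fin N) :=
    Finset.univ.filter (fun ℓ : Fin r → Fin N => StrictMono ℓ) with hA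
  set 𝒜 : Finset (Fin (2 * m) → Fin r → Fin N) := Fintype.piFinset (fun _ => A) with h𝒜
  -- degree identities for combined exponents
  have hsumdeg : ∀ L : Fin (2 * m) → Fin r → Fin N,
      ∑ i, homDeg w (betaF e L i) = 2 * m * n := by
    intro L
    calc ∑ i, homDeg w (betaF e L i)
        = ∑ p : Fin (2 * m) × Fin r, homDeg w (e p.2) := sum_homDeg_betaF w e L
    _ = ∑ _j : Fin (2 * m), ∑ k : Fin r, homDeg w (e k) :=
        Fintype.sum_prod_type (f := fun p : Fin (2 * m) × Fin r => homDeg w (e p.2))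
    _ = ∑ _j : Fin (2 * m), n := by
        exact Finset.sum_congr rfl fun j _ => hdegsum
    _ = 2 * m * n := by
        rw [Finset.sum_const, Finset.card_univ, Fintype.card_fin, smul_eq_mul]
  have hdegle : ∀ (L : Fin (2 * m) → Fin r → Fin N) (i : Fin N),
      homDeg w (betaF e L i) ≤ 2 * m * n := by
    intro L i
    have h := Finset.single_le_sum (f := fun i => homDeg w (betaF e L i))
      (fun _ _ => Nat.zero_le _) (Finset.mem_univ i)
    exact le_trans h (le_of_eq (hsumdeg L))
  -- pointwise expansion
  have hpoint : ∀ x : Fin N → Fin q → ℝ,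
      |Ustat B x| ^ (2 * m) = ∑ L ∈ 𝒜, ∏ i, mono (betaF e L i) (x i) := by
    intro x
    have h1 : |Ustat B x| ^ (2 * m) = (Ustat B x) ^ (2 * m) := by
      rw [pow_abs, abs_of_nonneg (Even.pow_nonneg ⟨m, by ring⟩ _)]
    have h2 : Ustat B x = ∑ ℓ ∈ A, ∏ k : Fin r, mono (e k) (x (ℓ k)) := by
      rw [Ustat]
      refine Finset.sum_congr rfl fun ℓ _ => Finset.prod_congr rfl fun k _ => ?_
      rw [mono, ← Finset.prod_subset (Finset.subset_univ (B.get k).1)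
        (fun c _ hc => by simp only [he]; rw [if_neg hc, pow_zero])]
      exact Finset.prod_congr rfl fun c hc => by simp only [he]; rw [if_pos hc]
    have h3 : (∑ ℓ ∈ A, ∏ k : Fin r, mono (e k) (x (ℓ k))) ^ (2 * m)
        = ∏ _j : Fin (2 * m), ∑ ℓ ∈ A, ∏ k : Fin r, mono (e k) (x (ℓ k)) := by
      rw [Finset.prod_const, Finset.card_univ, Fintype.card_fin]
    rw [h1, h2, h3, Finset.prod_univ_sum]
    refine Finset.sum_congr rfl fun L _ => ?_
    calc ∏ j, ∏ k, mono (e k) (x (L j k))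
        = ∏ p : Fin (2 * m) × Fin r, mono (e p.2) (x (L p.1 p.2)) :=
          (Fintype.prod_prod_type
            (f := fun p : Fin (2 * m) × Fin r => mono (e p.2) (x (L p.1 p.2)))).symm
    _ = ∏ i, mono (betaF e L i) (x i) := prod_mono_betaF e L x
  -- integrability of each term
  have hLint : ∀ L : Fin (2 * m) → Fin r → Fin N,
      Integrable (fun x : Fin N → Fin q → ℝ => ∏ i, mono (betaF e L i) (x i))
        (Measure.pi fun _ : Fin N => μ) := by
    intro L
    rw [hPvol]
    exact Integrable.fintype_prod (f := fun i => mono (betaF e L i))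
      (fun i => integrable_mono hmom (hdegle L i))
  -- integral of each term factorizes
  have hIeq : ∀ L : Fin (2 * m) → Fin r → Fin N,
      ∫ x, (∏ i, mono (betaF e L i) (x i)) ∂(Measure.pi fun _ : Fin N => μ)
        = ∏ i, ∫ y, mono (betaF e L i) y ∂μ := by
    intro L
    rw [hPvol]
    exact integral_fintype_prod_eq_prod (fun i => mono (betaF e L i))
  have hmain : (∫ x, |Ustat B x| ^ (2 * m) ∂(Measure.pi fun _ : Fin N => μ))
      = ∑ L ∈ 𝒜, ∏ i, ∫ y, mono (betaF e L i) y ∂μ := by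
    calc (∫ x, |Ustat B x| ^ (2 * m) ∂(Measure.pi fun _ : Fin N => μ))
        = ∫ x, (∑ L ∈ 𝒜, ∏ i, mono (betaF e L i) (x i)) ∂(Measure.pi fun _ : Fin N => μ) :=
          integral_congr_ae (Filter.Eventually.of_forall hpoint)
    _ = ∑ L ∈ 𝒜, ∫ x, (∏ i, mono (betaF e L i) (x i)) ∂(Measure.pi fun _ : Fin N => μ) :=
          integral_finset_sum 𝒜 (fun L _ => hLint L)
    _ = ∑ L ∈ 𝒜, ∏ i, ∫ y, mono (betaF e L i) y ∂μ :=
          Finset.sum_congr rfl fun L _ => hIeq L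
  -- the surviving terms
  set S : Finset (Fin (2 * m) → Fin r → Fin N) :=
    𝒜.filter (fun L => ∀ i, homDeg w (betaF e L i) ≠ 1) with hS
  have hvanish : ∀ L ∈ 𝒜, L ∉ S →
      (∏ i, ∫ y, mono (betaF e L i) y ∂μ) = 0 := by
    intro L hL hLS
    have hex : ∃ i, homDeg w (betaF e L i) = 1 := by
      by_contra h
      push_neg at h
      exact hLS (Finset.mem_filter.mpr ⟨hL, h⟩)
    obtain ⟨i, hi⟩ := hex
    exact Finset.prod_eq_zero (Finset.mem_univ i) (integral_mono_eq_zero hw1 hcent hi)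
  -- support-size bound for surviving terms
  have hcardT : ∀ L : Fin (2 * m) → Fin r → Fin N,
      (∀ i, homDeg w (betaF e L i) ≠ 1) →
      (Finset.univ.filter fun i => betaF e L i ≠ 0).card ≤ D := by
    intro L hL1
    set T : Finset (Fin N) := Finset.univ.filter fun i => betaF e L i ≠ 0 with hT
    have h2 : ∀ i ∈ T, 2 ≤ homDeg w (betaF e L i) := by
      intro i hi
      have hne0 : betaF e L i ≠ 0 := (Finset.mem_filter.mp hi).2
      have h1' : 1 ≤ homDeg w (betaF e L i) := by
        rcases Nat.eq_zero_or_pos (homDeg w (betaF e L i)) with h | h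
        · exfalso
          apply hne0
          funext c
          have h3 := apply_le_homDeg hw1 (betaF e L i) c
          simp only [Pi.zero_apply]
          omega
        · exact h
      have := hL1 i
      omega
    have hmul : T.card * 2 ≤ 2 * D := by
      calc T.card * 2 = ∑ _i ∈ T, 2 := by rw [Finset.sum_const, smul_eq_mul, mul_comm]
      _ ≤ ∑ i ∈ T, homDeg w (betaF e L i) := Finset.sum_le_sum h2
      _ ≤ ∑ i, homDeg w (betaF e L i) :=
          Finset.sum_le_sum_of_subset (Finset.subset_univ T)
      _ = 2 * m * n := hsumdeg L
      _ = 2 * D := by rw [hD, mul_assoc]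
    omega
  -- per-term bound
  have hterm : ∀ L ∈ S, (∏ i, ∫ y, mono (betaF e L i) y ∂μ) ≤ K ^ D := by
    intro L hL
    obtain ⟨-, hL1⟩ := Finset.mem_filter.mp hL
    set T : Finset (Fin N) := Finset.univ.filter fun i => betaF e L i ≠ 0 with hT
    have hout : ∀ i ∈ (Finset.univ : Finset (Fin N)), i ∉ T →
        |∫ y, mono (betaF e L i) y ∂μ| = 1 := by
      intro i _ hiT
      have hz : betaF e L i = 0 := by
        by_contra h
        exact hiT (Finset.mem_filter.mpr ⟨Finset.mem_univ i, h⟩)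
      rw [hz]
      have : ∫ y, mono (0 : Fin q → ℕ) y ∂μ = 1 := by
        simp [mono_zero]
      rw [this, abs_one]
    calc ∏ i, ∫ y, mono (betaF e L i) y ∂μ
        ≤ |∏ i, ∫ y, mono (betaF e L i) y ∂μ| := le_abs_self _
    _ = ∏ i, |∫ y, mono (betaF e L i) y ∂μ| := Finset.abs_prod _ _
    _ = ∏ i ∈ T, |∫ y, mono (betaF e L i) y ∂μ| :=
        (Finset.prod_subset (Finset.subset_univ T) hout).symm
    _ ≤ ∏ _i ∈ T, K := Finset.prod_le_prod (fun i _ => abs_nonneg _)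
        (fun i _ => hKb _ (hdegle L i))
    _ = K ^ T.card := Finset.prod_const K
    _ ≤ K ^ D := pow_le_pow_right₀ hK1 (hcardT L hL1)
  -- counting the surviving terms
  set 𝒯 : Finset (Finset (Fin N)) :=
    (Finset.univ : Finset (Fin N)).powerset.filter (fun T => T.card ≤ D) with h𝒯
  have hsubset : S ⊆ 𝒯.biUnion (fun T =>
      Fintype.piFinset fun _ : Fin (2 * m) => Fintype.piFinset fun _ : Fin r => T) := by
    intro L hL
    obtain ⟨-, hL1⟩ := Finset.mem_filter.mp hL
    refine Finset.mem_biUnion.mpr ⟨Finset.univ.filter fun i => betaF e L i ≠ 0, ?_, ?_⟩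
    · rw [h𝒯]
      exact Finset.mem_filter.mpr ⟨Finset.mem_powerset.mpr (Finset.filter_subset _ _),
        hcardT L hL1⟩
    · refine Fintype.mem_piFinset.mpr fun j => Fintype.mem_piFinset.mpr fun k => ?_
      refine Finset.mem_filter.mpr ⟨Finset.mem_univ _, ?_⟩
      have h1 : 1 ≤ homDeg w (betaF e L (L j k)) :=
        le_trans (hek1 k) (homDeg_mono w (le_betaF e L j k))
      intro h0
      have h2 := homDeg_eq_zero (w := w) h0
      omega
  have h𝒯card : 𝒯.card ≤ (D + 1) * N ^ D := by
    have hsub2 : 𝒯 ⊆ (Finset.range (D + 1)).biUnion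
        (fun t => Finset.powersetCard t (Finset.univ : Finset (Fin N))) := by
      intro T hT
      obtain ⟨hTp, hTc⟩ := Finset.mem_filter.mp hT
      exact Finset.mem_biUnion.mpr ⟨T.card, Finset.mem_range.mpr (by omega),
        Finset.mem_powersetCard.mpr ⟨Finset.subset_univ T, rfl⟩⟩
    calc 𝒯.card ≤ ((Finset.range (D + 1)).biUnion
        (fun t => Finset.powersetCard t (Finset.univ : Finset (Fin N)))).card :=
          Finset.card_le_card hsub2
    _ ≤ ∑ t ∈ Finset.range (D + 1),
          (Finset.powersetCard t (Finset.univ : Finset (Fin N))).card :=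
        Finset.card_biUnion_le
    _ ≤ ∑ _t ∈ Finset.range (D + 1), N ^ D := by
        refine Finset.sum_le_sum fun t ht => ?_
        rw [Finset.card_powersetCard, Finset.card_univ, Fintype.card_fin]
        exact le_trans (Nat.choose_le_pow N t)
          (Nat.pow_le_pow_right hN (Nat.lt_succ_iff.mp (Finset.mem_range.mp ht)))
    _ = (D + 1) * N ^ D := by rw [Finset.sum_const, Finset.card_range, smul_eq_mul]
  have hcount : S.card ≤ (D + 1) * N ^ D * (D ^ r) ^ (2 * m) := by
    calc S.card ≤ (𝒯.biUnion (fun T =>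
        Fintype.piFinset fun _ : Fin (2 * m) => Fintype.piFinset fun _ : Fin r => T)).card :=
          Finset.card_le_card hsubset
    _ ≤ ∑ T ∈ 𝒯, (Fintype.piFinset fun _ : Fin (2 * m) =>
          Fintype.piFinset fun _ : Fin r => T).card := Finset.card_biUnion_le
    _ ≤ ∑ _T ∈ 𝒯, (D ^ r) ^ (2 * m) := by
        refine Finset.sum_le_sum fun T hT => ?_
        have hTc : T.card ≤ D := (Finset.mem_filter.mp hT).2
        simp only [Fintype.card_piFinset, Finset.prod_const, Finset.card_univ,
          Fintype.card_fin]
        exact Nat.pow_le_pow_left (Nat.pow_le_pow_left hTc r) (2 * m)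
    _ = 𝒯.card * (D ^ r) ^ (2 * m) := by
        rw [Finset.sum_const, smul_eq_mul]
    _ ≤ (D + 1) * N ^ D * (D ^ r) ^ (2 * m) := Nat.mul_le_mul_right _ h𝒯card
  -- final chain
  have hKD0 : (0:ℝ) ≤ K ^ D := le_of_lt (pow_pos hKpos D)
  calc (∫ x, |Ustat B x| ^ (2 * m) ∂(Measure.pi fun _ : Fin N => μ))
      = ∑ L ∈ S, ∏ i, ∫ y, mono (betaF e L i) y ∂μ := by
        rw [hmain, ← Finset.sum_subset (Finset.filter_subset _ 𝒜) hvanish]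
  _ ≤ S.card • (K ^ D) := Finset.sum_le_card_nsmul _ _ _ hterm
  _ = (S.card : ℝ) * K ^ D := nsmul_eq_mul _ _
  _ ≤ (((D + 1) * N ^ D * (D ^ r) ^ (2 * m) : ℕ) : ℝ) * K ^ D := by
      refine mul_le_mul_of_nonneg_right ?_ hKD0
      exact_mod_cast hcount
  _ = ((D:ℝ) + 1) * ((D:ℝ) ^ r) ^ (2 * m) * K ^ D * (N:ℝ) ^ D := by
      push_cast
      ring
end

section
/- Let U_α be a generalized U-statistic of homogeneous degree n ≥ 1. For every A > 0 and δ > 0 there is an integer M = M(A, δ, n) such that the following holds: if μ is a centered Borel probability measure on ℝ^q with M finite homogeneous moments, then there is a constant C = C(μ, q, A, δ, n) > 0 such that for every N ≥ 1, μ^{⊗N}{ x ∈ (ℝ^q)^N : |U_α(x)| > N^{n/2 + δ} } ≤ C · N^{−A}. -/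
open MeasureTheory Finset
open scoped Classical

/-! Auxiliary lemmas -/

lemma integral_pi_prod {ι : Type*} [Fintype ι] {E : Type*} [MeasurableSpace E]
    (μ : Measure E) [SigmaFinite μ] (f : ι → E → ℝ) :
    ∫ x : ι → E, ∏ i, f i (x i) ∂(Measure.pi fun _ : ι => μ) = ∏ i, ∫ x, f i x ∂μ := by
  letI : MeasureSpace E := ⟨μ⟩
  exact integral_fintype_prod_eq_prod f (μ := fun _ => μ)

lemma integrable_pi_prod {ι : Type*} [Fintype ι] {E : Type*} [MeasurableSpace E]
    (μ : Measure E) [SigmaFinite μ] {f : ι → E → ℝ} (hf : ∀ i, Integrable (f i) μ) :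
    Integrable (fun x : ι → E => ∏ i, f i (x i)) (Measure.pi fun _ : ι => μ) := by
  letI : MeasureSpace E := ⟨μ⟩
  exact Integrable.fintype_prod hf

lemma exists_factor {ι : Type*} [Fintype ι] {N D : ℕ} (hN : 1 ≤ N) (L : ι → Fin N)
    (hL : (Finset.image L Finset.univ).card ≤ D) :
    ∃ ev : (ι → Fin D) × (Fin D → Fin N), ∀ p, ev.2 (ev.1 p) = L p := by
  classical
  set T := Finset.image L Finset.univ with hT
  have hmem : ∀ p, L p ∈ T := fun p => Finset.mem_image_of_mem _ (Finset.mem_univ p)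
  let u : {x // x ∈ T} → Fin D := fun t => Fin.castLE hL (T.equivFin t)
  have hu : Function.Injective u := fun a b hab => by
    apply T.equivFin.injective
    exact Fin.castLE_injective hL hab
  let e : ι → Fin D := fun p => u ⟨L p, hmem p⟩
  let v : Fin D → Fin N := fun d =>
    if h : ∃ t : {x // x ∈ T}, u t = d then (h.choose : Fin N) else ⟨0, hN⟩
  refine ⟨(e, v), fun p => ?_⟩
  have h : ∃ t : {x // x ∈ T}, u t = e p := ⟨⟨L p, hmem p⟩, rfl⟩
  show v (e p) = L p
  simp only [v, dif_pos h]
  have h2 : h.choose = ⟨L p, hmem p⟩ := hu h.choose_spec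
  rw [h2]

lemma card_small_range (ι : Type*) [Fintype ι] (N D : ℕ) (hN : 1 ≤ N) (hD : 1 ≤ D) :
    (Finset.univ.filter fun L : ι → Fin N =>
      (Finset.image L Finset.univ).card ≤ D).card ≤ D ^ (Fintype.card ι) * N ^ D := by
  classical
  have := Finset.card_le_card_of_injOn
    (fun L : ι → Fin N =>
      if h : (Finset.image L Finset.univ).card ≤ D
      then (exists_factor hN L h).choose else (fun _ => ⟨0, hD⟩, fun _ => ⟨0, hN⟩))
    (s := Finset.univ.filter fun L : ι → Fin N => (Finset.image L Finset.univ).card ≤ D)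
    (t := (Finset.univ : Finset ((ι → Fin D) × (Fin D → Fin N))))
    (fun _ _ => Finset.mem_univ _) ?_
  · calc _ ≤ _ := this
      _ ≤ D ^ (Fintype.card ι) * N ^ D := by
        simp [Finset.card_univ, Fintype.card_fun]
  · intro L1 h1 L2 h2 heq
    simp only [Finset.coe_filter, Set.mem_setOf_eq, Finset.mem_univ, true_and] at h1 h2
    simp only [dif_pos h1, dif_pos h2] at heq
    have s1 := (exists_factor hN L1 h1).choose_spec
    have s2 := (exists_factor hN L2 h2).choose_spec
    funext p
    rw [← s1 p, ← s2 p, heq]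

set_option maxHeartbeats 1000000 in
/-- Let `U_α` be a generalized U-statistic of homogeneous degree `n ≥ 1`.  For every
`A > 0` and `δ > 0` there is an integer `M = M(A, δ, n)` such that, if `μ` is a
centered Borel probability measure on `ℝ^q` with `M` finite homogeneous moments, then
there is `C = C(μ, q, A, δ, n) > 0` with
`μ^{⊗N}{ x : |U_α(x)| > N^{n/2 + δ} } ≤ C · N^{−A}` for all `N ≥ 1`. -/
theorem ustat_large_values (n : ℕ) (hn : 1 ≤ n) (A δ : ℝ) (hA : 0 < A) (hδ : 0 < δ) :
    ∃ M : ℕ, ∀ (q s : ℕ), 1 ≤ q → 1 ≤ s →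
      ∀ w : Fin q → ℕ, (∀ c, 1 ≤ w c ∧ w c ≤ s) →
      ∀ B : List (Finset (Fin q) × (Fin q → ℕ)), ValidBlocks B → ustatHomDeg w B = n →
      ∀ μ : Measure (Fin q → ℝ), IsProbabilityMeasure μ →
        IsCenteredMeasure w μ → HasFiniteHomMoments w μ M →
        ∃ C : ℝ, 0 < C ∧ ∀ N : ℕ, 1 ≤ N →
          (Measure.pi fun _ : Fin N => μ)
              {x : Fin N → Fin q → ℝ | (N : ℝ) ^ ((n : ℝ) / 2 + δ) < |Ustat B x|} ≤
            ENNReal.ofReal (C * (N : ℝ) ^ (-A)) := by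
  classical
  set m₀ : ℕ := ⌈A / δ⌉₊ + 1 with hm₀
  set m : ℕ := 2 * m₀ with hm
  refine ⟨m * n, ?_⟩
  intro q s hq hs w hw B hB hdegB μ hμ hcen hmom
  set M : ℕ := m * n with hM
  set r : ℕ := B.length with hr
  set E : Fin r → Fin q → ℕ :=
    fun k c => if c ∈ (B.get k).1 then (B.get k).2 c else 0 with hE
  set f : Fin r → (Fin q → ℝ) → ℝ := fun k v => ∏ c, v c ^ E k c with hf
  -- block product rewriting
  have hfS : ∀ (k : Fin r) (v : Fin q → ℝ),
      (∏ c ∈ (B.get k).1, v c ^ (B.get k).2 c) = f k v := by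
    intro k v
    have h1 : ∏ c ∈ (B.get k).1, v c ^ (B.get k).2 c
        = ∏ c ∈ (B.get k).1, v c ^ E k c :=
      Finset.prod_congr rfl (fun c hc => by
        have hc' : c ∈ B[(k : ℕ)].1 := hc
        simp [hE, hc'])
    rw [h1]
    exact Finset.prod_subset (Finset.subset_univ _) (fun c _ hc => by
      have hc' : c ∉ B[(k : ℕ)].1 := hc
      simp [hE, hc'])
  -- degree of the k-th block
  have hdegk : ∀ k : Fin r, homDeg w (E k) = ∑ c ∈ (B.get k).1, w c * (B.get k).2 c := by
    intro k
    show ∑ c, w c * E k c = _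
    have h1 : ∑ c ∈ (B.get k).1, w c * (B.get k).2 c
        = ∑ c ∈ (B.get k).1, w c * E k c :=
      Finset.sum_congr rfl (fun c hc => by
        have hc' : c ∈ B[(k : ℕ)].1 := hc
        simp [hE, hc'])
    rw [h1]
    exact (Finset.sum_subset (Finset.subset_univ _) (fun c _ hc => by
      have hc' : c ∉ B[(k : ℕ)].1 := hc
      simp [hE, hc'])).symm
  -- sum of block degrees
  have hsumdeg : ∑ k : Fin r, homDeg w (E k) = n := by
    calc ∑ k : Fin r, homDeg w (E k)
        = ∑ k : Fin B.length, (fun p => ∑ c ∈ p.1, w c * p.2 c) (B.get k) :=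
          Finset.sum_congr rfl (fun k _ => hdegk k)
      _ = (B.map fun p => ∑ c ∈ p.1, w c * p.2 c).sum := by
          simpa [List.get_eq_getElem] using
            Fin.sum_univ_fun_getElem B (fun p => ∑ c ∈ p.1, w c * p.2 c)
      _ = n := hdegB
  -- each block has degree ≥ 1
  have hdeg1 : ∀ k : Fin r, 1 ≤ homDeg w (E k) := by
    intro k
    have hmem : B.get k ∈ B := List.get_mem B k
    obtain ⟨hne, hpos⟩ := hB.2 _ hmem
    obtain ⟨c, hc⟩ := hne
    rw [hdegk]
    have h1 : 1 ≤ w c * (B.get k).2 c := by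
      have := Nat.mul_le_mul (hw c).1 (hpos c hc)
      simpa using this
    exact le_trans h1 (Finset.single_le_sum
      (f := fun c => w c * (B.get k).2 c) (fun i _ => Nat.zero_le _) hc)
  -- degree-1 blocks are centered
  have hcent1 : ∀ k : Fin r, homDeg w (E k) = 1 → ∫ v, f k v ∂μ = 0 := by
    intro k hk
    rw [hdegk] at hk
    have hmem : B.get k ∈ B := List.get_mem B k
    obtain ⟨hne, hpos⟩ := hB.2 _ hmem
    have hterm1 : ∀ c ∈ (B.get k).1, 1 ≤ w c * (B.get k).2 c := by
      intro c hc
      have := Nat.mul_le_mul (hw c).1 (hpos c hc)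
      simpa using this
    have hcard : (B.get k).1.card ≤ 1 := by
      have := Finset.card_nsmul_le_sum (B.get k).1
        (fun c => w c * (B.get k).2 c) 1 hterm1
      simpa only [smul_eq_mul, mul_one, hk] using this
    obtain ⟨c₀, hc₀⟩ := Finset.card_eq_one.mp
      (le_antisymm hcard (Finset.card_pos.mpr hne))
    rw [hc₀, Finset.sum_singleton] at hk
    obtain ⟨hw1, hα1⟩ := mul_eq_one.mp hk
    have hfk : ∀ v : Fin q → ℝ, f k v = v c₀ := by
      intro v
      rw [← hfS k v, hc₀, Finset.prod_singleton, hα1, pow_one]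
    calc ∫ v, f k v ∂μ = ∫ v, v c₀ ∂μ := by
          exact integral_congr_ae (Filter.Eventually.of_forall hfk)
      _ = 0 := hcen c₀ hw1
  -- integrability of monomials of degree ≤ M
  have hint : ∀ γ : Fin q → ℕ, homDeg w γ ≤ M →
      Integrable (fun v : Fin q → ℝ => ∏ c, v c ^ γ c) μ := by
    intro γ hγ
    have h1 := hmom γ hγ
    have hc : Continuous fun v : Fin q → ℝ => ∏ c, v c ^ γ c :=
      continuous_finset_prod _ fun c _ => (continuous_apply c).pow _
    refine h1.mono' hc.aestronglyMeasurable ?_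
    filter_upwards with v
    rw [Real.norm_eq_abs, Finset.abs_prod]
    exact le_of_eq (Finset.prod_congr rfl fun c _ => abs_pow _ _)
  -- uniform bound on integrals of monomials of degree ≤ M
  haveI : Nonempty (Fin q → Fin (M + 1)) := ⟨fun _ => 0⟩
  set K₀ : ℝ := max 1 (Finset.univ.sup' Finset.univ_nonempty
    (fun γ : Fin q → Fin (M + 1) => ∫ v, ∏ c, |v c| ^ (γ c : ℕ) ∂μ)) with hK₀def
  have hK1 : (1 : ℝ) ≤ K₀ := le_max_left _ _
  have hK0 : ∀ γ : Fin q → ℕ, homDeg w γ ≤ M →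
      |∫ v, ∏ c, v c ^ γ c ∂μ| ≤ K₀ := by
    intro γ hγ
    have hγc : ∀ c, γ c ≤ M := by
      intro c
      calc γ c = 1 * γ c := (one_mul _).symm
        _ ≤ w c * γ c := Nat.mul_le_mul_right _ (hw c).1
        _ ≤ homDeg w γ := Finset.single_le_sum
            (f := fun c => w c * γ c) (fun i _ => Nat.zero_le _) (Finset.mem_univ c)
        _ ≤ M := hγ
    have h1 : |∫ v, ∏ c, v c ^ γ c ∂μ| ≤ ∫ v, ∏ c, |v c| ^ γ c ∂μ := by
      simpa [Real.norm_eq_abs, Finset.abs_prod, abs_pow] using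
        norm_integral_le_integral_norm (μ := μ) (fun v : Fin q → ℝ => ∏ c, v c ^ γ c)
    refine h1.trans ?_
    rw [hK₀def]
    refine le_trans ?_ (le_max_right _ _)
    exact Finset.le_sup'
      (f := fun γ'' : Fin q → Fin (M + 1) => ∫ v, ∏ c, |v c| ^ (γ'' c : ℕ) ∂μ)
      (Finset.mem_univ (fun c => ⟨γ c, Nat.lt_succ_of_le (hγc c)⟩))
  set D : ℕ := m₀ * n with hD
  have hD1 : 1 ≤ D := Nat.one_le_iff_ne_zero.mpr (by positivity)
  refine ⟨K₀ ^ (m * r) * (D : ℝ) ^ (m * r), by positivity, ?_⟩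
  intro N hN
  set P : Measure (Fin N → Fin q → ℝ) := Measure.pi fun _ : Fin N => μ with hP
  haveI : IsProbabilityMeasure P := by infer_instance
  -- slots
  set β : ((Fin m × Fin r) → Fin N) → Fin N → Fin q → ℕ :=
    fun L i c => ∑ p ∈ Finset.univ.filter (fun p : Fin m × Fin r => L p = i), E p.2 c with hβ
  set g : ((Fin m × Fin r) → Fin N) → Fin N → (Fin q → ℝ) → ℝ :=
    fun L i v => ∏ c, v c ^ β L i c with hg
  -- fiberwise degree identity
  have hβdeg : ∀ L i, homDeg w (β L i) =
      ∑ p ∈ Finset.univ.filter (fun p : Fin m × Fin r => L p = i), homDeg w (E p.2) := by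
    intro L i
    show (∑ c, w c * β L i c) = _
    calc ∑ c, w c * β L i c
        = ∑ c, ∑ p ∈ Finset.univ.filter (fun p : Fin m × Fin r => L p = i),
            w c * E p.2 c := Finset.sum_congr rfl fun c _ => Finset.mul_sum _ _ _
      _ = ∑ p ∈ Finset.univ.filter (fun p : Fin m × Fin r => L p = i),
            ∑ c, w c * E p.2 c := Finset.sum_comm
      _ = _ := rfl
  have hβtot : ∀ L, ∑ i, homDeg w (β L i) = m * n := by
    intro L
    calc ∑ i, homDeg w (β L i)
        = ∑ i, ∑ p ∈ Finset.univ.filter (fun p : Fin m × Fin r => L p = i),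
            homDeg w (E p.2) := Finset.sum_congr rfl fun i _ => hβdeg L i
      _ = ∑ p : Fin m × Fin r, homDeg w (E p.2) :=
          Finset.sum_fiberwise Finset.univ L (fun p => homDeg w (E p.2))
      _ = ∑ _j : Fin m, ∑ k : Fin r, homDeg w (E k) := Fintype.sum_prod_type (f := fun p : Fin m × Fin r => homDeg w (E p.2))
      _ = m * n := by rw [Finset.sum_const, hsumdeg]; simp [mul_comm]
  have hβle : ∀ L i, homDeg w (β L i) ≤ M := by
    intro L i
    calc homDeg w (β L i) ≤ ∑ i', homDeg w (β L i') :=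
          Finset.single_le_sum (f := fun i' => homDeg w (β L i'))
            (fun _ _ => Nat.zero_le _) (Finset.mem_univ i)
      _ = m * n := hβtot L
  -- regrouping of the product over slots
  have hregroup : ∀ (L : (Fin m × Fin r) → Fin N) (x : Fin N → Fin q → ℝ),
      (∏ p : Fin m × Fin r, f p.2 (x (L p))) = ∏ i, g L i (x i) := by
    intro L x
    calc ∏ p : Fin m × Fin r, f p.2 (x (L p))
        = ∏ i, ∏ p ∈ Finset.univ.filter (fun p : Fin m × Fin r => L p = i),
            f p.2 (x (L p)) :=
          (Finset.prod_fiberwise Finset.univ L (fun p => f p.2 (x (L p)))).symm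
      _ = ∏ i, ∏ p ∈ Finset.univ.filter (fun p : Fin m × Fin r => L p = i),
            f p.2 (x i) := by
          refine Finset.prod_congr rfl fun i _ => Finset.prod_congr rfl fun p hp => ?_
          rw [(Finset.mem_filter.mp hp).2]
      _ = ∏ i, g L i (x i) := by
          refine Finset.prod_congr rfl fun i _ => ?_
          calc ∏ p ∈ Finset.univ.filter (fun p : Fin m × Fin r => L p = i), f p.2 (x i)
              = ∏ p ∈ Finset.univ.filter (fun p : Fin m × Fin r => L p = i),
                  ∏ c, x i c ^ E p.2 c := rfl
            _ = ∏ c, ∏ p ∈ Finset.univ.filter (fun p : Fin m × Fin r => L p = i),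
                  x i c ^ E p.2 c := Finset.prod_comm
            _ = ∏ c, x i c ^ β L i c :=
                Finset.prod_congr rfl fun c _ => Finset.prod_pow_eq_pow_sum _ _ _
            _ = g L i (x i) := rfl
  have hgint : ∀ L i, Integrable (g L i) μ := fun L i => hint _ (hβle L i)
  have hWint : ∀ L : (Fin m × Fin r) → Fin N,
      Integrable (fun x => ∏ p : Fin m × Fin r, f p.2 (x (L p))) P := by
    intro L
    have := integrable_pi_prod μ (f := g L) (fun i => hgint L i)
    apply this.congr
    filter_upwards with x using (hregroup L x).symm
  have hterm : ∀ L : (Fin m × Fin r) → Fin N,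
      ∫ x, ∏ p : Fin m × Fin r, f p.2 (x (L p)) ∂P = ∏ i, ∫ v, g L i v ∂μ := by
    intro L
    rw [show (fun x => ∏ p : Fin m × Fin r, f p.2 (x (L p)))
        = fun x => ∏ i, g L i (x i) from funext fun x => hregroup L x]
    exact integral_pi_prod μ (g L)
  -- if the term is nonzero, the image of L is small
  have hsmall : ∀ L : (Fin m × Fin r) → Fin N,
      (∏ i, ∫ v, g L i v ∂μ) ≠ 0 → (Finset.image L Finset.univ).card ≤ D := by
    intro L hL0
    have hne : ∀ i, (∫ v, g L i v ∂μ) ≠ 0 := by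
      intro i h
      exact hL0 (Finset.prod_eq_zero (Finset.mem_univ i) h)
    have h2 : ∀ i ∈ Finset.image L Finset.univ, 2 ≤ homDeg w (β L i) := by
      intro i hi
      by_contra hlt
      push_neg at hlt
      obtain ⟨p₀, _, hp₀⟩ := Finset.mem_image.mp hi
      have hp₀f : p₀ ∈ Finset.univ.filter (fun p : Fin m × Fin r => L p = i) :=
        Finset.mem_filter.mpr ⟨Finset.mem_univ _, hp₀⟩
      have h1le : 1 ≤ homDeg w (β L i) := by
        rw [hβdeg]
        exact le_trans (hdeg1 p₀.2) (Finset.single_le_sum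
          (f := fun p : Fin m × Fin r => homDeg w (E p.2))
          (fun _ _ => Nat.zero_le _) hp₀f)
      have heq1 : homDeg w (β L i) = 1 := le_antisymm (Nat.lt_succ_iff.mp hlt) h1le
      rw [hβdeg] at heq1
      have hcard : (Finset.univ.filter (fun p : Fin m × Fin r => L p = i)).card ≤ 1 := by
        have := Finset.card_nsmul_le_sum
          (Finset.univ.filter (fun p : Fin m × Fin r => L p = i))
          (fun p => homDeg w (E p.2)) 1 (fun p _ => hdeg1 p.2)
        simpa only [smul_eq_mul, mul_one, heq1] using this
      obtain ⟨p₁, hp₁⟩ := Finset.card_eq_one.mp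
        (le_antisymm hcard (Finset.card_pos.mpr ⟨p₀, hp₀f⟩))
      rw [hp₁, Finset.sum_singleton] at heq1
      have hβeq : β L i = E p₁.2 := by
        funext c
        show (∑ p ∈ Finset.univ.filter (fun p : Fin m × Fin r => L p = i), E p.2 c) = _
        rw [hp₁, Finset.sum_singleton]
      have hzero : (∫ v, g L i v ∂μ) = 0 := by
        have hgf : g L i = f p₁.2 := by
          funext v
          show (∏ c, v c ^ β L i c) = ∏ c, v c ^ E p₁.2 c
          rw [hβeq]
        rw [hgf]
        exact hcent1 p₁.2 heq1
      exact hne i hzero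
    have h3 : 2 * (Finset.image L Finset.univ).card ≤ m * n := by
      calc 2 * (Finset.image L Finset.univ).card
          = ∑ _i ∈ Finset.image L Finset.univ, 2 := by
            rw [Finset.sum_const, smul_eq_mul, mul_comm]
        _ ≤ ∑ i ∈ Finset.image L Finset.univ, homDeg w (β L i) := Finset.sum_le_sum h2
        _ ≤ ∑ i, homDeg w (β L i) :=
            Finset.sum_le_sum_of_subset (Finset.subset_univ _)
        _ = m * n := hβtot L
    have h4 : m * n = 2 * D := by rw [hm, hD, Nat.mul_assoc]
    rw [h4] at h3
    exact Nat.le_of_mul_le_mul_left h3 two_pos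
  -- each term is bounded by K₀ ^ (m * r)
  have htermbd : ∀ L : (Fin m × Fin r) → Fin N,
      |∏ i, ∫ v, g L i v ∂μ| ≤ K₀ ^ (m * r) := by
    intro L
    rw [Finset.abs_prod]
    have hout : ∀ i ∈ Finset.univ, i ∉ Finset.image L Finset.univ →
        |∫ v, g L i v ∂μ| = 1 := by
      intro i _ hiT
      have hfib : Finset.univ.filter (fun p : Fin m × Fin r => L p = i) = ∅ := by
        rw [Finset.filter_eq_empty_iff]
        intro p _ hLp
        exact hiT (Finset.mem_image.mpr ⟨p, Finset.mem_univ p, hLp⟩)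
      have hg1 : g L i = fun _ => 1 := by
        funext v
        show (∏ c, v c ^ β L i c) = 1
        have hβ0 : ∀ c, β L i c = 0 := by
          intro c
          show (∑ p ∈ Finset.univ.filter (fun p : Fin m × Fin r => L p = i), E p.2 c) = 0
          rw [hfib, Finset.sum_empty]
        simp [hβ0]
      rw [hg1]
      simp
    have h1 : (∏ i, |∫ v, g L i v ∂μ|)
        = ∏ i ∈ Finset.image L Finset.univ, |∫ v, g L i v ∂μ| :=
      (Finset.prod_subset (Finset.subset_univ _) hout).symm
    rw [h1]
    calc ∏ i ∈ Finset.image L Finset.univ, |∫ v, g L i v ∂μ|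
        ≤ ∏ _i ∈ Finset.image L Finset.univ, K₀ :=
          Finset.prod_le_prod (fun i _ => abs_nonneg _) (fun i _ => hK0 _ (hβle L i))
      _ = K₀ ^ (Finset.image L Finset.univ).card := Finset.prod_const _
      _ ≤ K₀ ^ (m * r) := by
          apply pow_le_pow_right₀ hK1
          calc (Finset.image L Finset.univ).card ≤ Finset.univ.card :=
                Finset.card_image_le
            _ = m * r := by simp [Finset.card_univ]
  -- expansion of U^m
  set Smono : Finset (Fin r → Fin N) :=
    Finset.univ.filter (fun ℓ : Fin r → Fin N => StrictMono ℓ) with hSmono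
  set Lmap : (Fin m → Fin r → Fin N) → (Fin m × Fin r) → Fin N :=
    fun t p => t p.1 p.2 with hLmap
  have hUexp : ∀ x : Fin N → Fin q → ℝ, Ustat B x ^ m =
      ∑ t ∈ Fintype.piFinset (fun _ : Fin m => Smono),
        ∏ p : Fin m × Fin r, f p.2 (x (Lmap t p)) := by
    intro x
    have h0 : Ustat B x = ∑ ℓ ∈ Smono, ∏ k : Fin r, f k (x (ℓ k)) := by
      show (∑ ℓ ∈ Finset.univ.filter (fun ℓ : Fin B.length → Fin N => StrictMono ℓ),
          ∏ k : Fin B.length, ∏ c ∈ (B.get k).1, x (ℓ k) c ^ (B.get k).2 c)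
          = ∑ ℓ ∈ Smono, ∏ k : Fin r, f k (x (ℓ k))
      exact Finset.sum_congr rfl fun ℓ _ => Finset.prod_congr rfl fun k _ => hfS k _
    rw [h0]
    calc (∑ ℓ ∈ Smono, ∏ k : Fin r, f k (x (ℓ k))) ^ m
        = ∏ _j : Fin m, ∑ ℓ ∈ Smono, ∏ k : Fin r, f k (x (ℓ k)) := by
          rw [Finset.prod_const, Finset.card_univ, Fintype.card_fin]
      _ = ∑ t ∈ Fintype.piFinset (fun _ : Fin m => Smono),
            ∏ j, ∏ k : Fin r, f k (x (t j k)) :=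
          Finset.prod_univ_sum _ _
      _ = ∑ t ∈ Fintype.piFinset (fun _ : Fin m => Smono),
            ∏ p : Fin m × Fin r, f p.2 (x (Lmap t p)) :=
          Finset.sum_congr rfl fun t _ =>
            (Fintype.prod_prod_type
              (f := fun p : Fin m × Fin r => f p.2 (x (Lmap t p)))).symm
  have hUint : Integrable (fun x => Ustat B x ^ m) P := by
    rw [show (fun x => Ustat B x ^ m) = fun x =>
        ∑ t ∈ Fintype.piFinset (fun _ : Fin m => Smono),
          ∏ p : Fin m × Fin r, f p.2 (x (Lmap t p)) from funext hUexp]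
    exact integrable_finset_sum _ (fun t _ => hWint (Lmap t))
  -- the moment bound
  have hmoment : ∫ x, Ustat B x ^ m ∂P ≤
      K₀ ^ (m * r) * ((D : ℝ) ^ (m * r) * (N : ℝ) ^ D) := by
    have hIeq : ∫ x, Ustat B x ^ m ∂P
        = ∑ t ∈ Fintype.piFinset (fun _ : Fin m => Smono),
            ∏ i, ∫ v, g (Lmap t) i v ∂μ := by
      calc ∫ x, Ustat B x ^ m ∂P
          = ∫ x, ∑ t ∈ Fintype.piFinset (fun _ : Fin m => Smono),
              ∏ p : Fin m × Fin r, f p.2 (x (Lmap t p)) ∂P :=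
            integral_congr_ae (Filter.Eventually.of_forall hUexp)
        _ = ∑ t ∈ Fintype.piFinset (fun _ : Fin m => Smono),
              ∫ x, ∏ p : Fin m × Fin r, f p.2 (x (Lmap t p)) ∂P :=
            integral_finset_sum _ (fun t _ => hWint (Lmap t))
        _ = ∑ t ∈ Fintype.piFinset (fun _ : Fin m => Smono),
              ∏ i, ∫ v, g (Lmap t) i v ∂μ :=
            Finset.sum_congr rfl fun t _ => hterm (Lmap t)
    rw [hIeq]
    set F := (Fintype.piFinset (fun _ : Fin m => Smono)).filter
      (fun t => (∏ i, ∫ v, g (Lmap t) i v ∂μ) ≠ 0) with hF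
    have hstep1 : (∑ t ∈ Fintype.piFinset (fun _ : Fin m => Smono),
        ∏ i, ∫ v, g (Lmap t) i v ∂μ) ≤ ∑ t ∈ F, |∏ i, ∫ v, g (Lmap t) i v ∂μ| := by
      calc (∑ t ∈ Fintype.piFinset (fun _ : Fin m => Smono),
            ∏ i, ∫ v, g (Lmap t) i v ∂μ)
          ≤ ∑ t ∈ Fintype.piFinset (fun _ : Fin m => Smono),
            |∏ i, ∫ v, g (Lmap t) i v ∂μ| :=
            Finset.sum_le_sum fun t _ => le_abs_self _
        _ = ∑ t ∈ F, |∏ i, ∫ v, g (Lmap t) i v ∂μ| := by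
            rw [hF]
            exact (Finset.sum_filter_of_ne (fun t _ habs => by
              intro h0
              exact habs (by rw [h0, abs_zero]))).symm
    have hstep2 : (∑ t ∈ F, |∏ i, ∫ v, g (Lmap t) i v ∂μ|)
        ≤ (F.card : ℝ) * K₀ ^ (m * r) := by
      have := Finset.sum_le_card_nsmul F
        (fun t => |∏ i, ∫ v, g (Lmap t) i v ∂μ|) (K₀ ^ (m * r))
        (fun t _ => htermbd (Lmap t))
      simpa [nsmul_eq_mul] using this
    have hLinj : Function.Injective Lmap := by
      intro t t' h
      funext j k
      exact congrFun h (j, k)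
    have hcard1 : F.card ≤ (Finset.univ.filter fun L : (Fin m × Fin r) → Fin N =>
        (Finset.image L Finset.univ).card ≤ D).card := by
      apply Finset.card_le_card_of_injOn Lmap
      · intro t ht
        rw [Finset.mem_coe, Finset.mem_filter]
        refine ⟨Finset.mem_univ _, hsmall _ ?_⟩
        exact (Finset.mem_filter.mp (Finset.mem_coe.mp ht)).2
      · exact fun a _ b _ h => hLinj h
    have hcard2 : F.card ≤ D ^ (m * r) * N ^ D := by
      refine le_trans hcard1 ?_
      have := card_small_range ((Fin m) × (Fin r)) N D hN hD1
      rw [Fintype.card_prod, Fintype.card_fin, Fintype.card_fin] at this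
      convert this using 3
      all_goals congr 1
      exact Subsingleton.elim _ _
    calc (∑ t ∈ Fintype.piFinset (fun _ : Fin m => Smono),
          ∏ i, ∫ v, g (Lmap t) i v ∂μ)
        ≤ (F.card : ℝ) * K₀ ^ (m * r) := le_trans hstep1 hstep2
      _ ≤ ((D ^ (m * r) * N ^ D : ℕ) : ℝ) * K₀ ^ (m * r) := by
          apply mul_le_mul_of_nonneg_right _ (by positivity)
          exact_mod_cast hcard2
      _ = K₀ ^ (m * r) * ((D : ℝ) ^ (m * r) * (N : ℝ) ^ D) := by
          push_cast
          ring
  -- Markov + arithmetic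
  have hN1 : (1 : ℝ) ≤ (N : ℝ) := by exact_mod_cast hN
  have hNpos : (0 : ℝ) < (N : ℝ) := lt_of_lt_of_le one_pos hN1
  set t : ℝ := (N : ℝ) ^ ((n : ℝ) / 2 + δ) with ht
  have htexp : (0 : ℝ) ≤ (n : ℝ) / 2 + δ := by positivity
  have ht1 : 1 ≤ t := Real.one_le_rpow hN1 htexp
  have htpos : (0 : ℝ) < t := lt_of_lt_of_le one_pos ht1
  have hεpos : (0 : ℝ) < t ^ m := by positivity
  have heven : Even m := ⟨m₀, by rw [hm]; ring⟩
  have hsub : {x : Fin N → Fin q → ℝ | t < |Ustat B x|}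
      ⊆ {x | t ^ m ≤ Ustat B x ^ m} := by
    intro x hx
    have h1 : t ^ m ≤ |Ustat B x| ^ m :=
      pow_le_pow_left₀ htpos.le (le_of_lt hx) m
    simpa [heven.pow_abs] using h1
  have hmarkov := mul_meas_ge_le_integral_of_nonneg (μ := P)
    (f := fun x => Ustat B x ^ m)
    (Filter.Eventually.of_forall fun x => heven.pow_nonneg _) hUint (t ^ m)
  have h3 : (P {x | t < |Ustat B x|}).toReal
      ≤ (P {x | t ^ m ≤ Ustat B x ^ m}).toReal :=
    ENNReal.toReal_mono (measure_ne_top _ _) (measure_mono hsub)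
  have h4 : (P {x | t ^ m ≤ Ustat B x ^ m}).toReal
      ≤ (∫ x, Ustat B x ^ m ∂P) / t ^ m := by
    rw [le_div_iff₀ hεpos]
    calc (P {x | t ^ m ≤ Ustat B x ^ m}).toReal * t ^ m
        = t ^ m * (P {x | t ^ m ≤ Ustat B x ^ m}).toReal := by ring
      _ ≤ ∫ x, Ustat B x ^ m ∂P := hmarkov
  have harith : (∫ x, Ustat B x ^ m ∂P) / t ^ m
      ≤ K₀ ^ (m * r) * (D : ℝ) ^ (m * r) * (N : ℝ) ^ (-A) := by
    rw [div_le_iff₀ hεpos]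
    refine le_trans hmoment ?_
    have hkey : ((N : ℝ)) ^ (D : ℕ) ≤ (N : ℝ) ^ (-A) * t ^ m := by
      have h5 : t ^ m = (N : ℝ) ^ (((n : ℝ) / 2 + δ) * (m : ℝ)) := by
        rw [ht, Real.rpow_mul hNpos.le, Real.rpow_natCast]
      have h6 : ((N : ℝ)) ^ (D : ℕ) = (N : ℝ) ^ ((D : ℕ) : ℝ) :=
        (Real.rpow_natCast _ _).symm
      rw [h5, h6, ← Real.rpow_add hNpos]
      apply Real.rpow_le_rpow_of_exponent_le hN1
      have hm2 : ((m : ℕ) : ℝ) = 2 * (m₀ : ℝ) := by rw [hm]; push_cast; ring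
      have hD2 : ((D : ℕ) : ℝ) = (m₀ : ℝ) * (n : ℝ) := by rw [hD]; push_cast; ring
      have hδm : A ≤ δ * (m : ℝ) := by
        have h7 : A / δ ≤ (m₀ : ℝ) := by
          refine le_trans (Nat.le_ceil _) ?_
          exact_mod_cast Nat.le_succ _
        have h8 : A ≤ (m₀ : ℝ) * δ := (div_le_iff₀ hδ).mp h7
        have hm₀0 : (0 : ℝ) ≤ (m₀ : ℝ) := Nat.cast_nonneg _
        nlinarith [hδ.le]
      have h9 : ((n : ℝ) / 2 + δ) * (m : ℝ) = (m₀ : ℝ) * (n : ℝ) + δ * (m : ℝ) := by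
        rw [hm2]; ring
      rw [hD2, h9]
      linarith
    calc K₀ ^ (m * r) * ((D : ℝ) ^ (m * r) * (N : ℝ) ^ (D : ℕ))
        ≤ K₀ ^ (m * r) * ((D : ℝ) ^ (m * r) * ((N : ℝ) ^ (-A) * t ^ m)) := by
          apply mul_le_mul_of_nonneg_left
            (mul_le_mul_of_nonneg_left hkey (by positivity)) (by positivity)
      _ = K₀ ^ (m * r) * (D : ℝ) ^ (m * r) * (N : ℝ) ^ (-A) * t ^ m := by ring
  calc P {x : Fin N → Fin q → ℝ | t < |Ustat B x|}
      = ENNReal.ofReal ((P {x : Fin N → Fin q → ℝ | t < |Ustat B x|}).toReal) :=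
        (ENNReal.ofReal_toReal (measure_ne_top _ _)).symm
    _ ≤ ENNReal.ofReal (K₀ ^ (m * r) * (D : ℝ) ^ (m * r) * (N : ℝ) ^ (-A)) :=
        ENNReal.ofReal_le_ofReal (le_trans h3 (le_trans h4 harith))
end

section
/- Let m ≥ 1 and ℓ ≥ 1, and let μ and ν be centered Borel probability measures on ℝ^q, each with 2mℓ finite homogeneous moments. Let U₁ and U₂ be generalized U-statistics of homogeneous degrees d₁ and d₂ respectively, let m_β be a monomial on ℝ^q of homogeneous degree k ≥ 1, and suppose d₁ + d₂ + k ≤ ℓ. Then there is a constant C = C(μ, ν, q, m, ℓ) > 0 such that for all N ≥ 1 and all 1 ≤ j ≤ N, if x₀ ∈ (ℝ^q)^{j−1}, x_j ∈ ℝ^q and x_t ∈ (ℝ^q)^{N−j} are independent with x₀ ∼ μ^{⊗(j−1)}, x_t ∼ ν^{⊗(N−j)}, and x_j distributed according to either μ or ν, then E[ |U₁(x₀) · m_β(x_j) · U₂(x_t)|^{2m} ] ≤ C · N^{(d₁ + d₂)m}. -/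
open MeasureTheory Finset
open scoped Classical

noncomputable def Gblk {q : ℕ} (B : List (Finset (Fin q) × (Fin q → ℕ)))
    (k : Fin B.length) (y : Fin q → ℝ) : ℝ :=
  ∏ c ∈ (B.get k).1, y c ^ (B.get k).2 c

def bdeg {q : ℕ} (w : Fin q → ℕ) (B : List (Finset (Fin q) × (Fin q → ℕ)))
    (k : Fin B.length) : ℕ :=
  ∑ c ∈ (B.get k).1, w c * (B.get k).2 c

def fiber {m' r n : ℕ} (φ : Fin m' → Fin r → Fin n) (t : Fin n) :
    Finset (Fin m' × Fin r) :=
  Finset.univ.filter (fun p => φ p.1 p.2 = t)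

noncomputable def Hfun {q : ℕ} (B : List (Finset (Fin q) × (Fin q → ℕ))) {m' n : ℕ}
    (φ : Fin m' → Fin B.length → Fin n) (t : Fin n) (y : Fin q → ℝ) : ℝ :=
  ∏ p ∈ fiber φ t, Gblk B p.2 y

def expo {q : ℕ} (B : List (Finset (Fin q) × (Fin q → ℕ))) (k : Fin B.length)
    (c : Fin q) : ℕ :=
  if c ∈ (B.get k).1 then (B.get k).2 c else 0

def Efun {q : ℕ} (w : Fin q → ℕ) (B : List (Finset (Fin q) × (Fin q → ℕ))) {m' n : ℕ}
    (φ : Fin m' → Fin B.length → Fin n) (t : Fin n) (c : Fin q) : ℕ :=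
  ∑ p ∈ fiber φ t, expo B p.2 c


lemma Gblk_eq_prod {q : ℕ} (B : List (Finset (Fin q) × (Fin q → ℕ)))
    (k : Fin B.length) (y : Fin q → ℝ) :
    Gblk B k y = ∏ c, y c ^ expo B k c := by
  unfold Gblk
  rw [← Finset.prod_subset (Finset.subset_univ (B.get k).1)
      (fun c _ hc => by rw [expo, if_neg hc, pow_zero])]
  exact Finset.prod_congr rfl fun c hc => by rw [expo, if_pos hc]

lemma Hfun_eq {q : ℕ} (w : Fin q → ℕ) (B : List (Finset (Fin q) × (Fin q → ℕ))) {m' n : ℕ}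
    (φ : Fin m' → Fin B.length → Fin n) (t : Fin n) (y : Fin q → ℝ) :
    Hfun B φ t y = ∏ c, y c ^ Efun w B φ t c := by
  unfold Hfun Efun
  simp_rw [Gblk_eq_prod]
  rw [Finset.prod_comm]
  exact Finset.prod_congr rfl fun c _ => (Finset.prod_pow_eq_pow_sum _ _ _)

lemma abs_Hfun {q : ℕ} (w : Fin q → ℕ) (B : List (Finset (Fin q) × (Fin q → ℕ))) {m' n : ℕ}
    (φ : Fin m' → Fin B.length → Fin n) (t : Fin n) (y : Fin q → ℝ) :
    |Hfun B φ t y| = ∏ c, |y c| ^ Efun w B φ t c := by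
  rw [Hfun_eq w, Finset.abs_prod]
  exact Finset.prod_congr rfl fun c _ => (abs_pow _ _)

lemma bdeg_eq_sum_expo {q : ℕ} (w : Fin q → ℕ) (B : List (Finset (Fin q) × (Fin q → ℕ)))
    (k : Fin B.length) : ∑ c, w c * expo B k c = bdeg w B k := by
  unfold bdeg
  rw [← Finset.sum_subset (Finset.subset_univ (B.get k).1)
      (fun c _ hc => by rw [expo, if_neg hc, mul_zero])]
  exact Finset.sum_congr rfl fun c hc => by rw [expo, if_pos hc]

lemma homDeg_Efun {q : ℕ} (w : Fin q → ℕ) (B : List (Finset (Fin q) × (Fin q → ℕ))) {m' n : ℕ}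
    (φ : Fin m' → Fin B.length → Fin n) (t : Fin n) :
    homDeg w (Efun w B φ t) = ∑ p ∈ fiber φ t, bdeg w B p.2 := by
  unfold homDeg Efun
  simp_rw [Finset.mul_sum]
  rw [Finset.sum_comm]
  exact Finset.sum_congr rfl fun p _ => bdeg_eq_sum_expo w B p.2

lemma list_sum_map_get {α : Type*} {M : Type*} [AddCommMonoid M] (l : List α) (f : α → M) :
    ∑ k : Fin l.length, f (l.get k) = (l.map f).sum := by
  induction l with
  | nil => simp
  | cons a l ih =>
    rw [show ∑ k : Fin (a :: l).length, f ((a :: l).get k)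
        = f a + ∑ k : Fin l.length, f (l.get k) from Fin.sum_univ_succ _,
      ih, List.map_cons, List.sum_cons]

lemma sum_bdeg {q : ℕ} (w : Fin q → ℕ) (B : List (Finset (Fin q) × (Fin q → ℕ))) :
    ∑ k, bdeg w B k = ustatHomDeg w B :=
  list_sum_map_get B (fun p => ∑ c ∈ p.1, w c * p.2 c)

lemma one_le_bdeg {q : ℕ} (w : Fin q → ℕ) (hw : ∀ c, 1 ≤ w c)
    {B : List (Finset (Fin q) × (Fin q → ℕ))} (hB : ValidBlocks B) (k : Fin B.length) :
    1 ≤ bdeg w B k := by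
  obtain ⟨hne, hα⟩ := (hB.2 (B.get k) (B.get_mem _))
  obtain ⟨c, hc⟩ := hne
  calc 1 ≤ w c * (B.get k).2 c :=
        Nat.one_le_iff_ne_zero.2 (Nat.mul_ne_zero (Nat.one_le_iff_ne_zero.1 (hw c))
          (Nat.one_le_iff_ne_zero.1 (hα c hc)))
    _ ≤ bdeg w B k := by
        unfold bdeg
        exact Finset.single_le_sum (f := fun c => w c * (B.get k).2 c)
          (fun c _ => Nat.zero_le _) hc

lemma deg_one_block {q : ℕ} (w : Fin q → ℕ) (hw : ∀ c, 1 ≤ w c)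
    {B : List (Finset (Fin q) × (Fin q → ℕ))} (hB : ValidBlocks B) (k : Fin B.length)
    (hk : bdeg w B k = 1) : ∃ c, w c = 1 ∧ ∀ y : Fin q → ℝ, Gblk B k y = y c := by
  obtain ⟨hne, hα⟩ := (hB.2 (B.get k) (B.get_mem _))
  have hterm : ∀ c ∈ (B.get k).1, 1 ≤ w c * (B.get k).2 c := fun c hc =>
    Nat.one_le_iff_ne_zero.2 (Nat.mul_ne_zero (Nat.one_le_iff_ne_zero.1 (hw c))
      (Nat.one_le_iff_ne_zero.1 (hα c hc)))
  have hcard : (B.get k).1.card ≤ 1 := by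
    calc (B.get k).1.card = ∑ _c ∈ (B.get k).1, 1 := by simp
      _ ≤ ∑ c ∈ (B.get k).1, w c * (B.get k).2 c := Finset.sum_le_sum hterm
      _ = 1 := hk
  obtain ⟨c, hc⟩ := Finset.card_eq_one.1 (le_antisymm hcard (Finset.card_pos.2 hne))
  have h1 : w c * (B.get k).2 c = 1 := by
    have := hk; unfold bdeg at this; rw [hc, Finset.sum_singleton] at this; exact this
  have hwc : w c = 1 := Nat.eq_one_of_mul_eq_one_right h1
  have hαc : (B.get k).2 c = 1 := Nat.eq_one_of_mul_eq_one_left h1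
  exact ⟨c, hwc, fun y => by unfold Gblk; rw [hc, Finset.prod_singleton, hαc, pow_one]⟩

lemma card_small_range_le {α γ : Type*} [Fintype α] [Nonempty α] [DecidableEq α]
    [Fintype γ] [DecidableEq γ] (J : ℕ) (S : Finset (α → γ))
    (hS : ∀ ψ ∈ S, (Finset.image ψ Finset.univ).card ≤ J) :
    S.card ≤ J ^ (Fintype.card α) * (Fintype.card γ) ^ J := by
  have hsub : S ⊆ Finset.image
      (fun ev : (α → Fin J) × (Fin J → γ) => fun a => ev.2 (ev.1 a)) Finset.univ := by
    intro ψ hψ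
    set l := (Finset.image ψ Finset.univ).toList with hl
    have hlen : l.length ≤ J := by
      rw [hl, Finset.length_toList]; exact hS ψ hψ
    have hmem : ∀ a, ψ a ∈ l := fun a => by
      rw [hl, Finset.mem_toList]; exact Finset.mem_image_of_mem ψ (Finset.mem_univ a)
    refine Finset.mem_image.2 ⟨⟨fun a => ⟨List.idxOf (ψ a) l,
      lt_of_lt_of_le (List.idxOf_lt_length_iff.2 (hmem a)) hlen⟩,
      fun i => l.getD i (ψ (Classical.arbitrary α))⟩, Finset.mem_univ _, ?_⟩
    funext a
    simp only
    rw [List.getD_eq_getElem l _ (List.idxOf_lt_length_iff.2 (hmem a))]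
    exact List.getElem_idxOf _
  calc S.card ≤ _ := Finset.card_le_card hsub
    _ ≤ Fintype.card ((α → Fin J) × (Fin J → γ)) :=
        Finset.card_image_le.trans (by rw [Finset.card_univ])
    _ = J ^ Fintype.card α * (Fintype.card γ) ^ J := by
        simp [Fintype.card_fun]

section PiLemmas

variable {α : Type*} [MeasurableSpace α] (μ : Measure α) [IsProbabilityMeasure μ]

lemma pi_integrable_prod {n : ℕ} (f : Fin n → α → ℝ) (hf : ∀ i, Integrable (f i) μ) :
    Integrable (fun x : Fin n → α => ∏ i, f i (x i)) (Measure.pi fun _ => μ) := by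
  letI : MeasureSpace α := ⟨μ⟩
  haveI : SigmaFinite (volume : Measure α) := by
    show SigmaFinite μ; infer_instance
  exact MeasureTheory.Integrable.fintype_prod (𝕜 := ℝ) hf

lemma pi_integral_prod {n : ℕ} (f : Fin n → α → ℝ) :
    ∫ x, ∏ i, f i (x i) ∂(Measure.pi fun _ : Fin n => μ) = ∏ i, ∫ y, f i y ∂μ := by
  letI : MeasureSpace α := ⟨μ⟩
  haveI : SigmaFinite (volume : Measure α) := by
    show SigmaFinite μ; infer_instance
  exact MeasureTheory.integral_fintype_prod_eq_prod (fun i => f i)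

end PiLemmas

def GoodPhi {q : ℕ} (w : Fin q → ℕ) (B : List (Finset (Fin q) × (Fin q → ℕ))) {m' n : ℕ}
    (φ : Fin m' → Fin B.length → Fin n) : Prop :=
  ∀ t p, fiber φ t = {p} → 2 ≤ bdeg w B p.2

lemma goodphi_range {q : ℕ} (w : Fin q → ℕ) (hw : ∀ c, 1 ≤ w c)
    {B : List (Finset (Fin q) × (Fin q → ℕ))} (hB : ValidBlocks B) {m' n : ℕ}
    (φ : Fin m' → Fin B.length → Fin n) (hφ : GoodPhi w B φ) :
    2 * (Finset.image (fun p : Fin m' × Fin B.length => φ p.1 p.2) Finset.univ).card ≤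
      m' * ustatHomDeg w B := by
  set img := Finset.image (fun p : Fin m' × Fin B.length => φ p.1 p.2) Finset.univ with himg
  calc 2 * img.card = ∑ _t ∈ img, 2 := by rw [Finset.sum_const, smul_eq_mul, mul_comm]
    _ ≤ ∑ t ∈ img, ∑ p ∈ fiber φ t, bdeg w B p.2 := by
        refine Finset.sum_le_sum fun t ht => ?_
        obtain ⟨p₀, _, hp₀⟩ := Finset.mem_image.1 ht
        have hp₀f : p₀ ∈ fiber φ t := by unfold fiber; simp [hp₀]
        rcases Nat.lt_or_ge (fiber φ t).card 2 with hc | hc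
        · have h1 : (fiber φ t).card = 1 :=
            le_antisymm (Nat.lt_succ_iff.1 hc) (Finset.card_pos.2 ⟨p₀, hp₀f⟩)
          obtain ⟨p, hp⟩ := Finset.card_eq_one.1 h1
          rw [hp, Finset.sum_singleton]
          exact hφ t p hp
        · calc 2 ≤ (fiber φ t).card := hc
            _ = ∑ _p ∈ fiber φ t, 1 := by simp
            _ ≤ ∑ p ∈ fiber φ t, bdeg w B p.2 :=
                Finset.sum_le_sum (fun p _ => one_le_bdeg w hw hB p.2)
    _ ≤ ∑ t ∈ (Finset.univ : Finset (Fin n)), ∑ p ∈ fiber φ t, bdeg w B p.2 :=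
        Finset.sum_le_sum_of_subset (Finset.subset_univ _)
    _ = ∑ p : Fin m' × Fin B.length, bdeg w B p.2 := by
        unfold fiber; exact Finset.sum_fiberwise _ _ _
    _ = m' * ustatHomDeg w B := by
        rw [Fintype.sum_prod_type,
          Finset.sum_congr rfl (fun (i : Fin m') _ => sum_bdeg w B),
          Finset.sum_const, Finset.card_univ, Fintype.card_fin, smul_eq_mul]

set_option maxHeartbeats 2000000 in
lemma ustat_even_moment_le {q : ℕ} (w : Fin q → ℕ) (hw : ∀ c, 1 ≤ w c)
    (μ : Measure (Fin q → ℝ)) [IsProbabilityMeasure μ]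
    (hcent : ∀ c, w c = 1 → ∫ x, x c ∂μ = 0)
    (m : ℕ) (hm : 1 ≤ m)
    (B : List (Finset (Fin q) × (Fin q → ℕ))) (hB : ValidBlocks B)
    (hmom : ∀ β : Fin q → ℕ, homDeg w β ≤ 2 * m * ustatHomDeg w B →
      Integrable (fun x : Fin q → ℝ => ∏ c, |x c| ^ β c) μ)
    (M : ℝ) (hM1 : 1 ≤ M)
    (hM : ∀ β : Fin q → ℕ, homDeg w β ≤ 2 * m * ustatHomDeg w B →
      ∫ y, ∏ c, |y c| ^ β c ∂μ ≤ M) (n : ℕ) :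
    ∫ x, (∑ ℓ ∈ Finset.univ.filter (fun ℓ : Fin B.length → Fin n => StrictMono ℓ),
        ∏ k : Fin B.length, Gblk B k (x (ℓ k))) ^ (2 * m)
      ∂(Measure.pi fun _ : Fin n => μ) ≤
    ((m * ustatHomDeg w B : ℝ) ^ (2 * m * B.length) * M ^ (2 * m * B.length)) *
      (n : ℝ) ^ (m * ustatHomDeg w B) := by
  set d := ustatHomDeg w B with hd
  have hr1 : 1 ≤ B.length := List.length_pos_iff.2 hB.1
  have hd1 : 1 ≤ d := by
    calc 1 ≤ bdeg w B ⟨0, hr1⟩ := one_le_bdeg w hw hB _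
      _ ≤ ∑ k, bdeg w B k := Finset.single_le_sum (f := fun k => bdeg w B k)
          (fun k _ => Nat.zero_le _) (Finset.mem_univ _)
      _ = d := sum_bdeg w B
  set 𝓢 : Finset (Fin B.length → Fin n) :=
    Finset.univ.filter (fun ℓ : Fin B.length → Fin n => StrictMono ℓ) with hS
  set S2 : Finset (Fin (2*m) → Fin B.length → Fin n) :=
    Fintype.piFinset (fun _ => 𝓢) with hS2
  -- Step 1: expansion
  have key : ∀ x : Fin n → Fin q → ℝ,
      (∑ ℓ ∈ 𝓢, ∏ k, Gblk B k (x (ℓ k))) ^ (2*m)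
        = ∑ φ ∈ S2, ∏ t : Fin n, Hfun B φ t (x t) := by
    intro x
    have h0 : (∑ ℓ ∈ 𝓢, ∏ k, Gblk B k (x (ℓ k))) ^ (2*m)
        = ∏ _i : Fin (2*m), (∑ ℓ ∈ 𝓢, ∏ k, Gblk B k (x (ℓ k))) := by
      rw [Finset.prod_const, Finset.card_univ, Fintype.card_fin]
    rw [h0, Finset.prod_univ_sum]
    refine Finset.sum_congr rfl fun φ _ => ?_
    calc ∏ i, ∏ k, Gblk B k (x (φ i k))
        = ∏ p : Fin (2*m) × Fin B.length, Gblk B p.2 (x (φ p.1 p.2)) :=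
          (Fintype.prod_prod_type (f := fun p : Fin (2*m) × Fin B.length =>
            Gblk B p.2 (x (φ p.1 p.2)))).symm
      _ = ∏ t : Fin n, ∏ p ∈ Finset.univ.filter
            (fun p : Fin (2*m) × Fin B.length => φ p.1 p.2 = t),
            Gblk B p.2 (x (φ p.1 p.2)) := (Finset.prod_fiberwise _ _ _).symm
      _ = ∏ t, Hfun B φ t (x t) := by
          refine Finset.prod_congr rfl fun t _ => ?_
          unfold Hfun fiber
          exact Finset.prod_congr rfl fun p hp => by rw [(Finset.mem_filter.1 hp).2]
  -- Step 2: per-φ facts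
  have hEdeg : ∀ (φ : Fin (2*m) → Fin B.length → Fin n) (t : Fin n),
      homDeg w (Efun w B φ t) ≤ 2*m*d := by
    intro φ t
    rw [homDeg_Efun]
    calc ∑ p ∈ fiber φ t, bdeg w B p.2
        ≤ ∑ p : Fin (2*m) × Fin B.length, bdeg w B p.2 :=
          Finset.sum_le_sum_of_subset (Finset.filter_subset _ _)
      _ = 2*m*d := by
          rw [Fintype.sum_prod_type,
            Finset.sum_congr rfl (fun (i : Fin (2*m)) _ => sum_bdeg w B),
            Finset.sum_const, Finset.card_univ, Fintype.card_fin, smul_eq_mul]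
  have hHint : ∀ (φ : Fin (2*m) → Fin B.length → Fin n) (t : Fin n),
      Integrable (Hfun B φ t) μ := by
    intro φ t
    refine (hmom _ (hEdeg φ t)).mono' ?_ (Filter.Eventually.of_forall fun y => ?_)
    · have h2 : Hfun B φ t = fun y => ∏ c, y c ^ Efun w B φ t c :=
        funext (Hfun_eq w B φ t)
      rw [h2]
      exact (Finset.measurable_prod Finset.univ
        (fun c _ => ((measurable_pi_apply c).pow_const _))).aestronglyMeasurable
    · rw [Real.norm_eq_abs, abs_Hfun w]
  have hHbound : ∀ (φ : Fin (2*m) → Fin B.length → Fin n) (t : Fin n),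
      |∫ y, Hfun B φ t y ∂μ| ≤ M := by
    intro φ t
    calc |∫ y, Hfun B φ t y ∂μ| ≤ ∫ y, |Hfun B φ t y| ∂μ := by
          simpa [Real.norm_eq_abs] using norm_integral_le_integral_norm (Hfun B φ t) (μ := μ)
      _ = ∫ y, ∏ c, |y c| ^ Efun w B φ t c ∂μ :=
          integral_congr_ae (Filter.Eventually.of_forall fun y => abs_Hfun w B φ t y)
      _ ≤ M := hM _ (hEdeg φ t)
  have hHone : ∀ (φ : Fin (2*m) → Fin B.length → Fin n) (t : Fin n),
      t ∉ Finset.image (fun p : Fin (2*m) × Fin B.length => φ p.1 p.2) Finset.univ →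
      ∫ y, Hfun B φ t y ∂μ = 1 := by
    intro φ t ht
    have hfib : fiber φ t = ∅ := by
      unfold fiber
      rw [Finset.filter_eq_empty_iff]
      intro p _ h
      exact ht (Finset.mem_image.2 ⟨p, Finset.mem_univ _, h⟩)
    have h2 : Hfun B φ t = fun _ => (1:ℝ) :=
      funext fun y => by unfold Hfun; rw [hfib, Finset.prod_empty]
    rw [h2]
    simp
  have hvanish : ∀ φ : Fin (2*m) → Fin B.length → Fin n, ¬ GoodPhi w B φ →
      ∏ t, ∫ y, Hfun B φ t y ∂μ = 0 := by
    intro φ hφ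
    unfold GoodPhi at hφ
    push_neg at hφ
    obtain ⟨t, p, hfib, hlt⟩ := hφ
    have hb1 : bdeg w B p.2 = 1 :=
      le_antisymm (Nat.lt_succ_iff.1 hlt) (one_le_bdeg w hw hB p.2)
    obtain ⟨c, hwc, hG⟩ := deg_one_block w hw hB p.2 hb1
    have hH : Hfun B φ t = fun y => y c :=
      funext fun y => by unfold Hfun; rw [hfib, Finset.prod_singleton, hG]
    refine Finset.prod_eq_zero (Finset.mem_univ t) ?_
    rw [hH]
    exact hcent c hwc
  have hgoodbound : ∀ φ : Fin (2*m) → Fin B.length → Fin n,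
      ∏ t, ∫ y, Hfun B φ t y ∂μ ≤ M ^ (2*m*B.length) := by
    intro φ
    set img := Finset.image (fun p : Fin (2*m) × Fin B.length => φ p.1 p.2) Finset.univ
      with himg
    calc ∏ t, ∫ y, Hfun B φ t y ∂μ ≤ |∏ t, ∫ y, Hfun B φ t y ∂μ| := le_abs_self _
      _ = ∏ t, |∫ y, Hfun B φ t y ∂μ| := Finset.abs_prod _ _
      _ = ∏ t ∈ img, |∫ y, Hfun B φ t y ∂μ| :=
          (Finset.prod_subset (Finset.subset_univ img)
            (fun t _ ht => by rw [hHone φ t ht, abs_one])).symm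
      _ ≤ ∏ _t ∈ img, M :=
          Finset.prod_le_prod (fun t _ => abs_nonneg _) (fun t _ => hHbound φ t)
      _ = M ^ img.card := Finset.prod_const M
      _ ≤ M ^ (2*m*B.length) := by
          refine pow_le_pow_right₀ hM1 ?_
          calc img.card ≤ Fintype.card (Fin (2*m) × Fin B.length) :=
                Finset.card_image_le.trans (by rw [Finset.card_univ])
            _ = 2*m*B.length := by
                rw [Fintype.card_prod, Fintype.card_fin, Fintype.card_fin]
  -- Step 3: counting
  have hcount : (S2.filter (GoodPhi w B)).card ≤ (m*d)^(2*m*B.length) * n^(m*d) := by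
    haveI : Nonempty (Fin (2*m) × Fin B.length) :=
      ⟨(⟨0, by omega⟩, ⟨0, hr1⟩)⟩
    set uncur : (Fin (2*m) → Fin B.length → Fin n) → (Fin (2*m) × Fin B.length → Fin n) :=
      fun φ p => φ p.1 p.2 with huncur
    have hinj : Function.Injective uncur := fun φ φ' h =>
      funext fun i => funext fun k => congrFun h (i,k)
    have h1 := card_small_range_le (m*d) ((S2.filter (GoodPhi w B)).image uncur) ?_
    · rw [Finset.card_image_of_injective _ hinj] at h1
      calc (S2.filter (GoodPhi w B)).card
          ≤ (m*d) ^ Fintype.card (Fin (2*m) × Fin B.length)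
            * (Fintype.card (Fin n)) ^ (m*d) := h1
        _ = (m*d)^(2*m*B.length) * n^(m*d) := by
            rw [Fintype.card_prod, Fintype.card_fin, Fintype.card_fin, Fintype.card_fin]
    · intro ψ hψ
      obtain ⟨φ, hφ, rfl⟩ := Finset.mem_image.1 hψ
      have hgood : GoodPhi w B φ := (Finset.mem_filter.1 hφ).2
      have h2 := goodphi_range w hw hB φ hgood
      have heq : Finset.image (uncur φ) Finset.univ
          = Finset.image (fun p : Fin (2*m) × Fin B.length => φ p.1 p.2) Finset.univ := rfl
      rw [heq]
      exact Nat.le_of_mul_le_mul_left (h2.trans_eq (mul_assoc 2 m d)) two_pos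
  -- Step 4: main chain
  calc ∫ x, (∑ ℓ ∈ 𝓢, ∏ k, Gblk B k (x (ℓ k))) ^ (2*m) ∂(Measure.pi fun _ : Fin n => μ)
      = ∫ x, ∑ φ ∈ S2, ∏ t, Hfun B φ t (x t) ∂(Measure.pi fun _ : Fin n => μ) :=
        integral_congr_ae (Filter.Eventually.of_forall fun x => key x)
    _ = ∑ φ ∈ S2, ∫ x, ∏ t, Hfun B φ t (x t) ∂(Measure.pi fun _ : Fin n => μ) :=
        integral_finset_sum S2 (fun φ _ =>
          pi_integrable_prod μ (fun t => Hfun B φ t) (fun t => hHint φ t))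
    _ = ∑ φ ∈ S2, ∏ t, ∫ y, Hfun B φ t y ∂μ :=
        Finset.sum_congr rfl fun φ _ => pi_integral_prod μ (fun t => Hfun B φ t)
    _ ≤ ∑ φ ∈ S2, (if GoodPhi w B φ then M^(2*m*B.length) else 0) := by
        refine Finset.sum_le_sum fun φ _ => ?_
        by_cases h : GoodPhi w B φ
        · rw [if_pos h]; exact hgoodbound φ
        · rw [if_neg h]; exact le_of_eq (hvanish φ h)
    _ = ∑ φ ∈ S2.filter (GoodPhi w B), M^(2*m*B.length) := (Finset.sum_filter _ _).symm
    _ = ((S2.filter (GoodPhi w B)).card : ℝ) * M^(2*m*B.length) := by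
        rw [Finset.sum_const, nsmul_eq_mul]
    _ ≤ (((m*d)^(2*m*B.length) * n^(m*d) : ℕ) : ℝ) * M^(2*m*B.length) := by
        refine mul_le_mul_of_nonneg_right ?_ (by positivity)
        exact_mod_cast hcount
    _ = ((m * d : ℝ) ^ (2 * m * B.length) * M ^ (2 * m * B.length)) * (n : ℝ) ^ (m * d) := by
        push_cast
        ring

set_option maxHeartbeats 2000000 in
/-- Let `m, ℓ ≥ 1` and let `μ`, `ν` be centered Borel probability measures on `ℝ^q`,
each with `2mℓ` finite homogeneous moments.  Let `U₁, U₂` be generalized U-statistics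
of homogeneous degrees `d₁, d₂`, let `m_β` be a monomial of homogeneous degree `k ≥ 1`,
with `d₁ + d₂ + k ≤ ℓ`.  Then there is `C = C(μ, ν, q, m, ℓ) > 0` such that for all
`N ≥ 1` and `1 ≤ j ≤ N`, for independent `x₀ ∼ μ^{⊗(j−1)}`, `x_j ∼ μ` or `ν`,
`x_t ∼ ν^{⊗(N−j)}`, one has
`E[|U₁(x₀) · m_β(x_j) · U₂(x_t)|^{2m}] ≤ C · N^{(d₁+d₂)m}`. -/
theorem mixed_ustat_monomial_moment_bound {q s : ℕ} (hq : 1 ≤ q) (hs : 1 ≤ s)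
    (w : Fin q → ℕ) (hw : ∀ c, 1 ≤ w c ∧ w c ≤ s)
    (m ℓ : ℕ) (hm : 1 ≤ m) (hℓ : 1 ≤ ℓ)
    (μ ν : Measure (Fin q → ℝ)) [IsProbabilityMeasure μ] [IsProbabilityMeasure ν]
    (hcentμ : IsCenteredMeasure w μ) (hcentν : IsCenteredMeasure w ν)
    (hmomμ : HasFiniteHomMoments w μ (2 * m * ℓ))
    (hmomν : HasFiniteHomMoments w ν (2 * m * ℓ))
    (B₁ B₂ : List (Finset (Fin q) × (Fin q → ℕ)))
    (hB₁ : ValidBlocks B₁) (hB₂ : ValidBlocks B₂)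
    (d₁ d₂ k : ℕ) (hd₁ : ustatHomDeg w B₁ = d₁) (hd₂ : ustatHomDeg w B₂ = d₂)
    (β : Fin q → ℕ) (hβ : homDeg w β = k) (hk : 1 ≤ k)
    (hsum : d₁ + d₂ + k ≤ ℓ) :
    ∃ C : ℝ, 0 < C ∧ ∀ N j : ℕ, 1 ≤ j → j ≤ N →
      ∀ κ : Measure (Fin q → ℝ), IsProbabilityMeasure κ → (κ = μ ∨ κ = ν) →
        (∫ z : (Fin (j - 1) → Fin q → ℝ) × ((Fin q → ℝ) × (Fin (N - j) → Fin q → ℝ)),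
            |Ustat B₁ z.1 * (∏ c, z.2.1 c ^ β c) * Ustat B₂ z.2.2| ^ (2 * m)
          ∂((Measure.pi fun _ : Fin (j - 1) => μ).prod
              (κ.prod (Measure.pi fun _ : Fin (N - j) => ν)))) ≤
          C * (N : ℝ) ^ ((d₁ + d₂) * m) := by
  subst hd₁ hd₂ hβ
  have hw' : ∀ c, 1 ≤ w c := fun c => (hw c).1
  set D₁ := ustatHomDeg w B₁ with hD₁
  set D₂ := ustatHomDeg w B₂ with hD₂
  have hle1 : D₁ ≤ ℓ := by omega
  have hle2 : D₂ ≤ ℓ := by omega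
  have hkℓ : homDeg w β ≤ ℓ := by omega
  -- uniform moment bound
  set F : Finset (Fin q → ℕ) := Fintype.piFinset (fun _ : Fin q => Finset.range (2*m*ℓ+1))
    with hF
  have hint_nonneg : ∀ (κ' : Measure (Fin q → ℝ)) (β' : Fin q → ℕ),
      0 ≤ ∫ y, ∏ c, |y c| ^ β' c ∂κ' := fun κ' β' =>
    integral_nonneg (fun y => Finset.prod_nonneg fun c _ => pow_nonneg (abs_nonneg _) _)
  set M : ℝ := 1 + (∑ β' ∈ F, ∫ y, ∏ c, |y c| ^ β' c ∂μ)
      + (∑ β' ∈ F, ∫ y, ∏ c, |y c| ^ β' c ∂ν) with hMdef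
  have hsumμ : 0 ≤ ∑ β' ∈ F, ∫ y, ∏ c, |y c| ^ β' c ∂μ :=
    Finset.sum_nonneg fun β' _ => hint_nonneg μ β'
  have hsumν : 0 ≤ ∑ β' ∈ F, ∫ y, ∏ c, |y c| ^ β' c ∂ν :=
    Finset.sum_nonneg fun β' _ => hint_nonneg ν β'
  have hM1 : 1 ≤ M := by rw [hMdef]; linarith
  have hMemF : ∀ β' : Fin q → ℕ, homDeg w β' ≤ 2*m*ℓ → β' ∈ F := by
    intro β' h
    rw [hF, Fintype.mem_piFinset]
    intro c
    rw [Finset.mem_range, Nat.lt_succ_iff]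
    calc β' c ≤ w c * β' c := Nat.le_mul_of_pos_left _ (hw' c)
      _ ≤ homDeg w β' := by
          unfold homDeg
          exact Finset.single_le_sum (f := fun c => w c * β' c)
            (fun _ _ => Nat.zero_le _) (Finset.mem_univ c)
      _ ≤ 2*m*ℓ := h
  have hMμ : ∀ β' : Fin q → ℕ, homDeg w β' ≤ 2*m*ℓ →
      ∫ y, ∏ c, |y c| ^ β' c ∂μ ≤ M := by
    intro β' h
    have h1 : ∫ y, ∏ c, |y c| ^ β' c ∂μ ≤ ∑ β'' ∈ F, ∫ y, ∏ c, |y c| ^ β'' c ∂μ :=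
      Finset.single_le_sum (f := fun β'' => ∫ y, ∏ c, |y c| ^ β'' c ∂μ)
        (fun β'' _ => hint_nonneg μ β'') (hMemF β' h)
    rw [hMdef]; linarith
  have hMν : ∀ β' : Fin q → ℕ, homDeg w β' ≤ 2*m*ℓ →
      ∫ y, ∏ c, |y c| ^ β' c ∂ν ≤ M := by
    intro β' h
    have h1 : ∫ y, ∏ c, |y c| ^ β' c ∂ν ≤ ∑ β'' ∈ F, ∫ y, ∏ c, |y c| ^ β'' c ∂ν :=
      Finset.single_le_sum (f := fun β'' => ∫ y, ∏ c, |y c| ^ β'' c ∂ν)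
        (fun β'' _ => hint_nonneg ν β'') (hMemF β' h)
    rw [hMdef]; linarith
  -- constants
  set C₁ : ℝ := (m * D₁ : ℝ) ^ (2*m*B₁.length) * M ^ (2*m*B₁.length) with hC₁
  set C₂ : ℝ := (m * D₂ : ℝ) ^ (2*m*B₂.length) * M ^ (2*m*B₂.length) with hC₂
  have hD₁1 : 1 ≤ D₁ := by
    have hr1 : 1 ≤ B₁.length := List.length_pos_iff.2 hB₁.1
    calc 1 ≤ bdeg w B₁ ⟨0, hr1⟩ := one_le_bdeg w hw' hB₁ _
      _ ≤ ∑ k', bdeg w B₁ k' := Finset.single_le_sum (f := fun k' => bdeg w B₁ k')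
          (fun _ _ => Nat.zero_le _) (Finset.mem_univ _)
      _ = D₁ := sum_bdeg w B₁
  have hD₂1 : 1 ≤ D₂ := by
    have hr1 : 1 ≤ B₂.length := List.length_pos_iff.2 hB₂.1
    calc 1 ≤ bdeg w B₂ ⟨0, hr1⟩ := one_le_bdeg w hw' hB₂ _
      _ ≤ ∑ k', bdeg w B₂ k' := Finset.single_le_sum (f := fun k' => bdeg w B₂ k')
          (fun _ _ => Nat.zero_le _) (Finset.mem_univ _)
      _ = D₂ := sum_bdeg w B₂
  have hmD₁pos : (0:ℝ) < (m:ℝ) * (D₁:ℝ) := by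
    exact_mod_cast Nat.mul_pos hm hD₁1
  have hmD₂pos : (0:ℝ) < (m:ℝ) * (D₂:ℝ) := by
    exact_mod_cast Nat.mul_pos hm hD₂1
  have hMpos : (0:ℝ) < M := lt_of_lt_of_le one_pos hM1
  have hC₁pos : 0 < C₁ := by rw [hC₁]; positivity
  have hC₂pos : 0 < C₂ := by rw [hC₂]; positivity
  refine ⟨C₁ * (M * C₂), by positivity, ?_⟩
  intro N j hj1 hjN κ hκP hκ
  haveI := hκP
  have h2mD₁ : 2*m*D₁ ≤ 2*m*ℓ := Nat.mul_le_mul (le_refl (2*m)) hle1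
  have h2mD₂ : 2*m*D₂ ≤ 2*m*ℓ := Nat.mul_le_mul (le_refl (2*m)) hle2
  have hU₁ := ustat_even_moment_le w hw' μ hcentμ m hm B₁ hB₁
    (fun β' h => hmomμ β' (h.trans h2mD₁)) M hM1
    (fun β' h => hMμ β' (h.trans h2mD₁)) (j-1)
  have hU₂ := ustat_even_moment_le w hw' ν hcentν m hm B₂ hB₂
    (fun β' h => hmomν β' (h.trans h2mD₂)) M hM1
    (fun β' h => hMν β' (h.trans h2mD₂)) (N-j)
  have hA : ∫ x, (Ustat B₁ x)^(2*m) ∂(Measure.pi fun _ : Fin (j-1) => μ)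
      ≤ C₁ * ((j-1 : ℕ) : ℝ)^(m*D₁) := hU₁
  have hCv : ∫ x, (Ustat B₂ x)^(2*m) ∂(Measure.pi fun _ : Fin (N-j) => ν)
      ≤ C₂ * ((N-j : ℕ) : ℝ)^(m*D₂) := hU₂
  have hcast1 : (((j-1 : ℕ) : ℝ))^(m*D₁) ≤ (N:ℝ)^(m*D₁) :=
    pow_le_pow_left₀ (Nat.cast_nonneg _) (Nat.cast_le.2 (by omega)) _
  have hcast2 : (((N-j : ℕ) : ℝ))^(m*D₂) ≤ (N:ℝ)^(m*D₂) :=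
    pow_le_pow_left₀ (Nat.cast_nonneg _) (Nat.cast_le.2 (by omega)) _
  have hA' : ∫ x, (Ustat B₁ x)^(2*m) ∂(Measure.pi fun _ : Fin (j-1) => μ)
      ≤ C₁ * (N:ℝ)^(m*D₁) :=
    hA.trans (mul_le_mul_of_nonneg_left hcast1 hC₁pos.le)
  have hCv' : ∫ x, (Ustat B₂ x)^(2*m) ∂(Measure.pi fun _ : Fin (N-j) => ν)
      ≤ C₂ * (N:ℝ)^(m*D₂) :=
    hCv.trans (mul_le_mul_of_nonneg_left hcast2 hC₂pos.le)
  -- middle factor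
  have hβ2 : homDeg w (fun c => β c * (2*m)) ≤ 2*m*ℓ := by
    unfold homDeg
    calc ∑ c, w c * (β c * (2*m)) = (∑ c, w c * β c) * (2*m) := by
          rw [Finset.sum_mul]
          exact Finset.sum_congr rfl fun c _ => (mul_assoc _ _ _).symm
      _ ≤ ℓ * (2*m) := Nat.mul_le_mul hkℓ (le_refl _)
      _ = 2*m*ℓ := by ring
  have hptw0 : ∀ y : Fin q → ℝ, 0 ≤ (∏ c, y c ^ β c)^(2*m) := fun y => by
    rw [pow_mul]; exact pow_nonneg (sq_nonneg _) m
  have hptw : ∀ y : Fin q → ℝ, (∏ c, y c ^ β c)^(2*m) ≤ ∏ c, |y c| ^ (β c * (2*m)) := by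
    intro y
    calc (∏ c, y c ^ β c)^(2*m) ≤ |(∏ c, y c ^ β c)^(2*m)| := le_abs_self _
      _ = ∏ c, |y c| ^ (β c * (2*m)) := by
          rw [abs_pow, Finset.abs_prod, ← Finset.prod_pow]
          exact Finset.prod_congr rfl fun c _ => by rw [abs_pow, ← pow_mul]
  have hmid : ∫ y, (∏ c, y c ^ β c)^(2*m) ∂κ ≤ M := by
    rcases hκ with rfl | rfl
    · calc ∫ y, (∏ c, y c ^ β c)^(2*m) ∂κ
          ≤ ∫ y, ∏ c, |y c| ^ (β c * (2*m)) ∂κ :=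
            integral_mono_of_nonneg (Filter.Eventually.of_forall hptw0)
              (hmomμ _ hβ2) (Filter.Eventually.of_forall hptw)
        _ ≤ M := hMμ _ hβ2
    · calc ∫ y, (∏ c, y c ^ β c)^(2*m) ∂κ
          ≤ ∫ y, ∏ c, |y c| ^ (β c * (2*m)) ∂κ :=
            integral_mono_of_nonneg (Filter.Eventually.of_forall hptw0)
              (hmomν _ hβ2) (Filter.Eventually.of_forall hptw)
        _ ≤ M := hMν _ hβ2
  -- nonnegativity
  have nA : 0 ≤ ∫ x, (Ustat B₁ x)^(2*m) ∂(Measure.pi fun _ : Fin (j-1) => μ) :=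
    integral_nonneg fun x => by rw [pow_mul]; exact pow_nonneg (sq_nonneg _) m
  have nB : 0 ≤ ∫ y, (∏ c, y c ^ β c)^(2*m) ∂κ := integral_nonneg hptw0
  have nC : 0 ≤ ∫ x, (Ustat B₂ x)^(2*m) ∂(Measure.pi fun _ : Fin (N-j) => ν) :=
    integral_nonneg fun x => by rw [pow_mul]; exact pow_nonneg (sq_nonneg _) m
  -- factorization
  have hsplit : ∀ z : (Fin (j-1) → Fin q → ℝ) × ((Fin q → ℝ) × (Fin (N-j) → Fin q → ℝ)),
      |Ustat B₁ z.1 * (∏ c, z.2.1 c ^ β c) * Ustat B₂ z.2.2| ^ (2*m)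
        = (Ustat B₁ z.1)^(2*m) * ((∏ c, z.2.1 c ^ β c)^(2*m) * (Ustat B₂ z.2.2)^(2*m)) := by
    intro z
    rw [abs_mul, abs_mul, mul_pow, mul_pow]
    simp only [pow_mul, sq_abs]
    ring
  have hfact : (∫ z : (Fin (j-1) → Fin q → ℝ) × ((Fin q → ℝ) × (Fin (N-j) → Fin q → ℝ)),
        |Ustat B₁ z.1 * (∏ c, z.2.1 c ^ β c) * Ustat B₂ z.2.2| ^ (2*m)
        ∂((Measure.pi fun _ : Fin (j-1) => μ).prod
            (κ.prod (Measure.pi fun _ : Fin (N-j) => ν))))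
      = (∫ x, (Ustat B₁ x)^(2*m) ∂(Measure.pi fun _ : Fin (j-1) => μ)) *
        ((∫ y, (∏ c, y c ^ β c)^(2*m) ∂κ) *
         (∫ x, (Ustat B₂ x)^(2*m) ∂(Measure.pi fun _ : Fin (N-j) => ν))) := by
    calc (∫ z : (Fin (j-1) → Fin q → ℝ) × ((Fin q → ℝ) × (Fin (N-j) → Fin q → ℝ)),
          |Ustat B₁ z.1 * (∏ c, z.2.1 c ^ β c) * Ustat B₂ z.2.2| ^ (2*m)
          ∂((Measure.pi fun _ : Fin (j-1) => μ).prod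
              (κ.prod (Measure.pi fun _ : Fin (N-j) => ν))))
        = ∫ z : (Fin (j-1) → Fin q → ℝ) × ((Fin q → ℝ) × (Fin (N-j) → Fin q → ℝ)),
            (Ustat B₁ z.1)^(2*m) * ((∏ c, z.2.1 c ^ β c)^(2*m) * (Ustat B₂ z.2.2)^(2*m))
          ∂((Measure.pi fun _ : Fin (j-1) => μ).prod
              (κ.prod (Measure.pi fun _ : Fin (N-j) => ν))) :=
          integral_congr_ae (Filter.Eventually.of_forall fun z => hsplit z)
      _ = (∫ x, (Ustat B₁ x)^(2*m) ∂(Measure.pi fun _ : Fin (j-1) => μ)) *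
          (∫ b : (Fin q → ℝ) × (Fin (N-j) → Fin q → ℝ),
            (∏ c, b.1 c ^ β c)^(2*m) * (Ustat B₂ b.2)^(2*m)
            ∂(κ.prod (Measure.pi fun _ : Fin (N-j) => ν))) :=
          integral_prod_mul (fun a => (Ustat B₁ a)^(2*m))
            (fun b : (Fin q → ℝ) × (Fin (N-j) → Fin q → ℝ) =>
              (∏ c, b.1 c ^ β c)^(2*m) * (Ustat B₂ b.2)^(2*m))
      _ = (∫ x, (Ustat B₁ x)^(2*m) ∂(Measure.pi fun _ : Fin (j-1) => μ)) *
          ((∫ y, (∏ c, y c ^ β c)^(2*m) ∂κ) *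
           (∫ x, (Ustat B₂ x)^(2*m) ∂(Measure.pi fun _ : Fin (N-j) => ν))) := by
          congr 1
          exact integral_prod_mul (fun y : Fin q → ℝ => (∏ c, y c ^ β c)^(2*m))
            (fun x : Fin (N-j) → Fin q → ℝ => (Ustat B₂ x)^(2*m))
  rw [hfact]
  calc (∫ x, (Ustat B₁ x)^(2*m) ∂(Measure.pi fun _ : Fin (j-1) => μ)) *
        ((∫ y, (∏ c, y c ^ β c)^(2*m) ∂κ) *
         (∫ x, (Ustat B₂ x)^(2*m) ∂(Measure.pi fun _ : Fin (N-j) => ν)))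
      ≤ (C₁ * (N:ℝ)^(m*D₁)) * (M * (C₂ * (N:ℝ)^(m*D₂))) :=
        mul_le_mul hA' (mul_le_mul hmid hCv' nC hMpos.le) (mul_nonneg nB nC)
          (mul_nonneg hC₁pos.le (pow_nonneg (Nat.cast_nonneg N) _))
    _ = (C₁ * (M * C₂)) * (N:ℝ)^((D₁+D₂)*m) := by
        rw [show (D₁+D₂)*m = m*D₁ + m*D₂ by ring, pow_add]
        ring
end
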